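/- If U ⊆ Sym(Ω) is closed under inverses and some moiety of the infinite set Ω is full with respect to U, then there exists x ∈ Sym(Ω) of order 2 such that (Ux)⁷U²x ∪ (xU)⁷xU² = Sym(Ω). -/

import Mathlib

open Equiv Function Set Cardinal

universe u

namespace Stmt2

variable {X Y Z W : Type u}

/-- successor permutation on a sigma of `ZMod`s -/
def bump {ι : Type u} (N : ι → ℕ) : Equiv.Perm (Σ i, ZMod (N i)) where
  toFun p := ⟨p.1, p.2 + 1⟩
  invFun p := ⟨p.1, p.2 - 1⟩
  left_inv p := by cases p; simp
  right_inv p := by cases p; simp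

@[simp] lemma bump_apply {ι : Type u} (N : ι → ℕ) (i : ι) (k : ZMod (N i)) :
    bump N ⟨i, k⟩ = ⟨i, k + 1⟩ := rfl

/-- `f` and `g` are conjugate via some bijection. -/
def PConj (f : Equiv.Perm X) (g : Equiv.Perm Y) : Prop :=
  ∃ e : X ≃ Y, ∀ x, e (f x) = g (e x)

lemma PConj.refl (f : Perm X) : PConj f f := ⟨Equiv.refl X, fun _ => rfl⟩

lemma PConj.symm {f : Perm X} {g : Perm Y} (h : PConj f g) : PConj g f := by
  obtain ⟨e, he⟩ := h
  refine ⟨e.symm, fun y => e.injective ?_⟩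
  rw [Equiv.apply_symm_apply, he, Equiv.apply_symm_apply]

lemma PConj.trans {f : Perm X} {g : Perm Y} {h : Perm Z}
    (h1 : PConj f g) (h2 : PConj g h) : PConj f h := by
  obtain ⟨e1, he1⟩ := h1
  obtain ⟨e2, he2⟩ := h2
  exact ⟨e1.trans e2, fun x => by simp [he1, he2]⟩

lemma PConj.of_eq {f g : Perm X} (h : f = g) : PConj f g := h ▸ PConj.refl f

/-- cast between `ZMod`s -/
def zc {m n : ℕ} (h : m = n) : ZMod m ≃ ZMod n := Equiv.cast (congrArg ZMod h)

lemma zc_add_one {m n : ℕ} (h : m = n) (k : ZMod m) : zc h (k + 1) = zc h k + 1 := by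
  subst h; rfl

lemma zc_heq {m n : ℕ} (h : m = n) (k : ZMod m) : HEq (zc h k) k := by
  subst h; rfl

/-- reindexing a bump along a fiber-preserving base equivalence -/
lemma pconj_bump_reindex {ι ι' : Type u} {N : ι → ℕ} {N' : ι' → ℕ}
    (b : ι ≃ ι') (hb : ∀ i, N' (b i) = N i) : PConj (bump N) (bump N') := by
  have hb2 : ∀ j, N (b.symm j) = N' j := fun j => by
    conv_rhs => rw [← b.apply_symm_apply j]
    rw [hb]
  refine ⟨⟨fun p => ⟨b p.1, zc (hb p.1).symm p.2⟩,
          fun p => ⟨b.symm p.1, zc (hb2 p.1).symm p.2⟩, ?_, ?_⟩, ?_⟩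
  · rintro ⟨i, k⟩
    exact Sigma.ext (b.symm_apply_apply i) (((zc_heq _ _).trans (zc_heq _ _)))
  · rintro ⟨j, k⟩
    exact Sigma.ext (b.apply_symm_apply j) (((zc_heq _ _).trans (zc_heq _ _)))
  · rintro ⟨i, k⟩
    show (⟨b i, zc (hb i).symm (k+1)⟩ : Σ j, ZMod (N' j)) = ⟨b i, zc (hb i).symm k + 1⟩
    rw [zc_add_one]

/-- sum of two bumps is a bump -/
lemma pconj_sum_bump {ι ι' : Type u} (N : ι → ℕ) (N' : ι' → ℕ) :
    PConj (Equiv.sumCongr (bump N) (bump N')) (bump (Sum.elim N N')) := by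
  refine ⟨⟨fun p => Sum.rec (fun q => ⟨Sum.inl q.1, q.2⟩) (fun q => ⟨Sum.inr q.1, q.2⟩) p,
          fun p => match p with
            | ⟨Sum.inl i, k⟩ => Sum.inl ⟨i, k⟩
            | ⟨Sum.inr j, k⟩ => Sum.inr ⟨j, k⟩, ?_, ?_⟩, ?_⟩
  · rintro (⟨i,k⟩|⟨j,k⟩) <;> rfl
  · rintro ⟨(i|j), k⟩ <;> rfl
  · rintro (⟨i,k⟩|⟨j,k⟩) <;> rfl

lemma PConj.sumCongr {f : Perm X} {g : Perm Y} {f' : Perm Z} {g' : Perm W}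
    (h1 : PConj f f') (h2 : PConj g g') :
    PConj (Equiv.sumCongr f g) (Equiv.sumCongr f' g') := by
  obtain ⟨e1, he1⟩ := h1
  obtain ⟨e2, he2⟩ := h2
  refine ⟨Equiv.sumCongr e1 e2, ?_⟩
  rintro (x|y) <;> simp [he1, he2]


lemma zpow_fix (f : Perm X) (a : X) (j : ℤ) :
    (f ^ j) a = a ↔ ((Function.minimalPeriod ⇑f a : ℤ) ∣ j) := by
  have h := MulAction.zpow_smul_eq_iff_minimalPeriod_dvd (a := f) (b := a) (n := j)
  simpa using h

def orbSetoid (f : Perm X) : Setoid X where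
  r a b := ∃ k : ℤ, (f ^ k) a = b
  iseqv := by
    refine ⟨fun a => ⟨0, rfl⟩, ?_, ?_⟩
    · rintro a b ⟨k, rfl⟩
      exact ⟨-k, by simp [← Equiv.Perm.mul_apply, ← zpow_add]⟩
    · rintro a b c ⟨k, rfl⟩ ⟨l, rfl⟩
      exact ⟨k + l, by simp [← Equiv.Perm.mul_apply, ← zpow_add, add_comm]⟩

def Orb (f : Perm X) : Type u := Quotient (orbSetoid f)

def omk (f : Perm X) (x : X) : Orb f := Quotient.mk (orbSetoid f) x

noncomputable def per {f : Perm X} (o : Orb f) : ℕ := Function.minimalPeriod ⇑f o.out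

lemma orb_out_spec {f : Perm X} (x : X) :
    ∃ k : ℤ, (f ^ k) ((omk f x).out) = x :=
  Quotient.exact (Quotient.out_eq (omk f x))

noncomputable def dlog (f : Perm X) (x : X) : ℤ := (orb_out_spec (f := f) x).choose

lemma dlog_spec (f : Perm X) (x : X) : (f ^ dlog f x) ((omk f x).out) = x :=
  (orb_out_spec (f := f) x).choose_spec

lemma pow_out_congr {f : Perm X} (o : Orb f) (j j' : ℤ)
    (h : ((j : ZMod (per o))) = ((j' : ZMod (per o)))) :
    (f ^ j) o.out = (f ^ j') o.out := by
  have hd : ((per o : ℤ)) ∣ (j - j') := by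
    have : ((j - j' : ℤ) : ZMod (per o)) = 0 := by push_cast [h]; ring
    rwa [ZMod.intCast_zmod_eq_zero_iff_dvd] at this
  obtain ⟨c, hc⟩ := hd
  have hj : j = j' + (per o : ℤ) * c := by linarith
  rw [hj, zpow_add, Equiv.Perm.mul_apply]
  congr 1
  rw [zpow_fix]
  exact ⟨c, rfl⟩

lemma cast_mod_congr (n : ℕ) (j : ℤ) :
    (((ZMod.cast ((j : ZMod n)) : ℤ)) : ZMod n) = ((j : ZMod n)) := by
  rw [ZMod.intCast_zmod_cast]

noncomputable def decompE (f : Perm X) : X ≃ Σ o : Orb f, ZMod (per o) where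
  toFun x := ⟨omk f x, ((dlog f x : ZMod (per (omk f x))))⟩
  invFun p := (f ^ (ZMod.cast p.2 : ℤ)) p.1.out
  left_inv x := by
    show (f ^ (ZMod.cast ((dlog f x : ZMod (per (omk f x)))) : ℤ)) ((omk f x).out) = x
    conv_rhs => rw [← dlog_spec f x]
    exact pow_out_congr _ _ _ (cast_mod_congr _ _)
  right_inv p := by
    obtain ⟨o, k⟩ := p
    set y : X := (f ^ (ZMod.cast k : ℤ)) o.out with hy
    have hbase : omk f y = o := by
      rw [← Quotient.out_eq o]
      apply Quotient.sound
      exact ⟨-(ZMod.cast k : ℤ), by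
        rw [hy, ← Equiv.Perm.mul_apply, ← zpow_add]
        simp⟩
    refine Sigma.ext hbase ?_
    have houtY : ((omk f y).out : X) = o.out := by rw [hbase]
    have hdl : (f ^ dlog f y) o.out = (f ^ (ZMod.cast k : ℤ)) o.out := by
      conv_rhs => rw [← hy]
      rw [← houtY]
      exact dlog_spec f y
    have h2 : ((dlog f y : ZMod (per o))) = k := by
      have h3 : (f ^ (ZMod.cast ((dlog f y : ZMod (per o))) : ℤ)) o.out
          = (f ^ (ZMod.cast k : ℤ)) o.out := by
        rw [pow_out_congr o _ _ (cast_mod_congr _ _)]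
        exact hdl
      set c1 : ℤ := (ZMod.cast ((dlog f y : ZMod (per o))) : ℤ) with hc1
      set c2 : ℤ := (ZMod.cast k : ℤ) with hc2
      have h6 : (f ^ (c1 - c2)) o.out = o.out := by
        rw [show c1 - c2 = -c2 + c1 by ring, zpow_add, Equiv.Perm.mul_apply, h3,
          ← Equiv.Perm.mul_apply, ← zpow_add]
        simp
      rw [zpow_fix] at h6
      have h7 : ((c1 - c2 : ℤ) : ZMod (per o)) = 0 := by
        rwa [ZMod.intCast_zmod_eq_zero_iff_dvd]
      push_cast [hc1, hc2] at h7
      exact sub_eq_zero.mp h7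
    have hper : per (omk f y) = per o := by rw [hbase]
    have : HEq ((dlog f y : ZMod (per (omk f y)))) ((dlog f y : ZMod (per o))) := by
      rw [hper]
    exact this.trans (heq_of_eq h2)



lemma decompE_equivariant (f : Perm X) (x : X) :
    decompE f (f x) = bump per (decompE f x) := by
  apply (decompE f).symm.injective
  rw [Equiv.symm_apply_apply]
  symm
  have hred : (decompE f).symm ((bump per) ((decompE f) x))
      = (f ^ (ZMod.cast (((dlog f x : ZMod (per (omk f x)))) + 1) : ℤ)) ((omk f x).out) := rfl
  rw [hred]
  conv_rhs => rw [← dlog_spec f x]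
  rw [show (⇑f) ((f ^ dlog f x) ((omk f x).out)) = (f ^ (1 + dlog f x)) ((omk f x).out) by
    rw [zpow_add, zpow_one, Equiv.Perm.mul_apply]]
  apply pow_out_congr
  push_cast [ZMod.intCast_zmod_cast]
  ring

lemma decomp (f : Perm X) :
    ∃ (ι : Type u) (N : ι → ℕ), Cardinal.mk ι ≤ Cardinal.mk X ∧ PConj f (bump N) :=
  ⟨Orb f, per, Cardinal.mk_quotient_le, ⟨decompE f, decompE_equivariant f⟩⟩

/-! ### Full permutations -/

section Full

variable (I : Type u)

def modelN : ℕ × I → ℕ := Prod.fst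

/-- a permutation with `#I` orbits of every size -/
def FullPerm (f : Perm X) : Prop := PConj f (bump (modelN I))

variable {I}

lemma count_model (n : ℕ) : #{p : ℕ × I // modelN I p = n} = #I := by
  apply Cardinal.mk_congr
  refine ⟨fun p => p.1.2, fun i => ⟨(n, i), rfl⟩, ?_, fun i => rfl⟩
  rintro ⟨⟨m, i⟩, h⟩
  have : m = n := h
  subst this; rfl

lemma exists_base_equiv {ι ι' : Type u} (N : ι → ℕ) (N' : ι' → ℕ)
    (h : ∀ n, #{i // N i = n} = #{j // N' j = n}) :
    ∃ b : ι ≃ ι', ∀ i, N' (b i) = N i := by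
  have e : ∀ n, {i // N i = n} ≃ {j // N' j = n} := fun n => Classical.choice (Cardinal.eq.mp (h n))
  refine ⟨(sigmaFiberEquiv N).symm.trans ((Equiv.sigmaCongrRight e).trans (sigmaFiberEquiv N')), ?_⟩
  intro i
  exact (e (N i) ⟨i, rfl⟩).2

lemma fullPerm_reindex {f : Perm X} {ι : Type u} {N : ι → ℕ} (hf : PConj f (bump N))
    (hc : ∀ n, #{i // N i = n} = #I) : FullPerm I f := by
  obtain ⟨b, hb⟩ := exists_base_equiv N (modelN I) (fun n => by rw [hc n, count_model])
  exact hf.trans (pconj_bump_reindex b hb)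

lemma subtype_sum_card {A B : Type u} (P : A ⊕ B → Prop) :
    #{k : A ⊕ B // P k} = #{a : A // P (Sum.inl a)} + #{b : B // P (Sum.inr b)} := by
  have hs : #({a : A // P (Sum.inl a)} ⊕ {b : B // P (Sum.inr b)})
      = #{a : A // P (Sum.inl a)} + #{b : B // P (Sum.inr b)} := by
    rw [Cardinal.mk_sum]; simp
  rw [← hs]
  apply Cardinal.mk_congr
  refine ⟨fun k => ?_, fun s => ?_, ?_, ?_⟩
  · rcases k with ⟨(a | b), hk⟩
    · exact Sum.inl ⟨a, hk⟩
    · exact Sum.inr ⟨b, hk⟩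
  · rcases s with (⟨a, ha⟩ | ⟨b, hb⟩)
    · exact ⟨Sum.inl a, ha⟩
    · exact ⟨Sum.inr b, hb⟩
  · rintro ⟨(a | b), hk⟩ <;> rfl
  · rintro (⟨a, ha⟩ | ⟨b, hb⟩) <;> rfl

lemma FullPerm.sum_junk {Y : Type u} {f : Perm X} (hf : FullPerm I f) (β : Perm Y)
    (hI : ℵ₀ ≤ #I) (hY : #Y ≤ #I) : FullPerm I (Equiv.sumCongr f β) := by
  obtain ⟨ι, N, hN, hβ⟩ := decomp β
  have h1 : PConj (Equiv.sumCongr f β) (bump (Sum.elim (modelN I) N)) :=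
    (PConj.sumCongr hf hβ).trans (pconj_sum_bump _ _)
  apply fullPerm_reindex h1
  intro n
  rw [subtype_sum_card]
  have h2 : #{p : ℕ × I // Sum.elim (modelN I) N (Sum.inl p) = n} = #I := count_model n
  have h3 : #{i : ι // Sum.elim (modelN I) N (Sum.inr i) = n} ≤ #I :=
    (Cardinal.mk_subtype_le _).trans (hN.trans hY)
  rw [h2]
  exact Cardinal.add_eq_left hI h3

lemma FullPerm.ofPConj {Y : Type u} {f : Perm X} {g : Perm Y} (h : PConj g f)
    (hf : FullPerm I f) : FullPerm I g := h.trans hf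

lemma FullPerm.pconj_of_full {Y : Type u} {f : Perm X} {g : Perm Y}
    (hf : FullPerm I f) (hg : FullPerm I g) : PConj f g := hf.trans hg.symm

lemma exists_fullPerm (hI : ℵ₀ ≤ #I) (hX : #X = #I) : ∃ s : Perm X, FullPerm I s := by
  have hinj : Function.Injective
      (fun q : (Σ p : ℕ × I, ZMod (modelN I p)) => ((q.1 : ℕ × I), (ZMod.cast q.2 : ℤ))) := by
    rintro ⟨p, k⟩ ⟨p', k'⟩ h
    simp only [Prod.mk.injEq] at h
    obtain ⟨h1, h2⟩ := h
    subst h1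
    refine Sigma.ext rfl (heq_of_eq ?_)
    have := congrArg (fun z : ℤ => (z : ZMod (modelN I p))) h2
    simpa [ZMod.intCast_zmod_cast] using this
  have hcard : #(Σ p : ℕ × I, ZMod (modelN I p)) = #I := by
    apply le_antisymm
    · refine (Cardinal.mk_le_of_injective hinj).trans ?_
      rw [Cardinal.mk_prod, Cardinal.mk_prod, Cardinal.mk_int, Cardinal.mk_nat]
      simp only [Cardinal.lift_id, Cardinal.lift_aleph0, Cardinal.lift_uzero]
      calc ℵ₀ * #I * ℵ₀ ≤ #I * #I * #I := by
            gcongr <;> exact hI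
        _ = #I := by rw [Cardinal.mul_eq_self (hI), Cardinal.mul_eq_self hI]
    · exact Cardinal.mk_le_of_injective (f := fun i : I => ⟨(1, i), 0⟩)
        (fun i j h => by simpa using congrArg (fun q : (Σ p : ℕ × I, ZMod (modelN I p)) => q.1.2) h)
  have e : X ≃ (Σ p : ℕ × I, ZMod (modelN I p)) := Classical.choice (Cardinal.eq.mp (hX.trans hcard.symm))
  refine ⟨e.trans ((bump (modelN I)).trans e.symm), ⟨e, fun x => ?_⟩⟩
  simp

end Full

/-! ### Set and permutation helpers -/

section Helpers

variable {X : Type u}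

noncomputable def cardEquiv {Y : Type u} (h : #X = #Y) : X ≃ Y :=
  Classical.choice (Cardinal.eq.mp h)

lemma exists_split {κ : Cardinal.{u}} (S : Set X) (hκ : ℵ₀ ≤ κ) (hS : #↥S = κ) :
    ∃ D : Set X, D ⊆ S ∧ #↥D = κ ∧ #↥(S \ D) = κ := by
  have h2 : #↥S = #(↥S ⊕ ↥S) := by
    rw [Cardinal.mk_sum]; simp [hS]
    exact (Cardinal.add_eq_self hκ).symm
  have e : ↥S ≃ ↥S ⊕ ↥S := cardEquiv h2
  refine ⟨Subtype.val '' (⇑e ⁻¹' (Set.range Sum.inl)), ?_, ?_, ?_⟩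
  · rintro a ⟨s, _, rfl⟩; exact s.2
  · rw [Cardinal.mk_image_eq Subtype.val_injective]
    have : ⇑e ⁻¹' (Set.range Sum.inl) = Set.range (fun t : ↥S => e.symm (Sum.inl t)) := by
      ext s
      constructor
      · rintro ⟨t, ht⟩
        refine ⟨t, ?_⟩
        show e.symm _ = s
        rw [ht]; simp
      · rintro ⟨t, rfl⟩
        exact ⟨t, by simp⟩
    rw [this, Cardinal.mk_range_eq _ (fun a b hab => by
      have := congrArg e hab; simpa using this), hS]
  · have hset : S \ Subtype.val '' (⇑e ⁻¹' (Set.range Sum.inl))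
        = Subtype.val '' (⇑e ⁻¹' (Set.range Sum.inr)) := by
      ext a
      constructor
      · rintro ⟨ha, hna⟩
        refine ⟨⟨a, ha⟩, ?_, rfl⟩
        rcases he : e ⟨a, ha⟩ with p | p
        · exact absurd ⟨⟨a, ha⟩, ⟨p, he.symm⟩, rfl⟩ hna
        · exact ⟨p, he.symm⟩
      · rintro ⟨s, hs, rfl⟩
        refine ⟨s.2, ?_⟩
        rintro ⟨t, ⟨p, hp⟩, hts⟩
        have : t = s := Subtype.ext hts
        subst this
        obtain ⟨p', hp'⟩ := hs
        rw [← hp] at hp'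
        cases hp'
    rw [hset, Cardinal.mk_image_eq Subtype.val_injective]
    have : ⇑e ⁻¹' (Set.range Sum.inr) = Set.range (fun t : ↥S => e.symm (Sum.inr t)) := by
      ext s
      constructor
      · rintro ⟨t, ht⟩
        refine ⟨t, ?_⟩
        show e.symm _ = s
        rw [ht]; simp
      · rintro ⟨t, rfl⟩
        exact ⟨t, by simp⟩
    rw [this, Cardinal.mk_range_eq _ (fun a b hab => by
      have := congrArg e hab; simpa using this), hS]

open scoped Classical in
noncomputable def extendPerm (S T : Set X) (e₀ : ↥S ≃ ↥T) (e₁ : ↥(Sᶜ) ≃ ↥(Tᶜ)) : Perm X :=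
  (Equiv.Set.sumCompl S).symm.trans ((e₀.sumCongr e₁).trans (Equiv.Set.sumCompl T))

lemma extendPerm_mem (S T : Set X) (e₀ : ↥S ≃ ↥T) (e₁ : ↥(Sᶜ) ≃ ↥(Tᶜ))
    {a : X} (h : a ∈ S) : extendPerm S T e₀ e₁ a = (e₀ ⟨a, h⟩ : X) := by
  classical
  simp [extendPerm, Equiv.Set.sumCompl_symm_apply_of_mem, h]

lemma extendPerm_not_mem (S T : Set X) (e₀ : ↥S ≃ ↥T) (e₁ : ↥(Sᶜ) ≃ ↥(Tᶜ))
    {a : X} (h : a ∉ S) : extendPerm S T e₀ e₁ a = (e₁ ⟨a, h⟩ : X) := by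
  classical
  simp [extendPerm, Equiv.Set.sumCompl_symm_apply_of_notMem, h]

lemma exists_perm_iff (S T : Set X) (h1 : #↥S = #↥T) (h2 : #↥(Sᶜ) = #↥(Tᶜ)) :
    ∃ f : Perm X, ∀ a, a ∈ S ↔ f a ∈ T := by
  have e₀ : ↥S ≃ ↥T := cardEquiv h1
  have e₁ : ↥(Sᶜ) ≃ ↥(Tᶜ) := cardEquiv h2
  refine ⟨extendPerm S T e₀ e₁, fun a => ?_⟩
  by_cases h : a ∈ S
  · rw [extendPerm_mem S T e₀ e₁ h]
    exact iff_of_true h (e₀ ⟨a, h⟩).2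
  · rw [extendPerm_not_mem S T e₀ e₁ h]
    exact iff_of_false h (e₁ ⟨a, h⟩).2

/-- invariance of a set under a permutation -/
def PInv (f : Perm X) (S : Set X) : Prop := ∀ a, a ∈ S ↔ f a ∈ S

lemma PInv.sym {f : Perm X} {S : Set X} (h : PInv f S) : ∀ a, f a ∈ S ↔ a ∈ S :=
  fun a => (h a).symm

theorem Equiv.Perm.apply_inv_self (f : Perm X) (x : X) : f (f⁻¹ x) = x :=
  Equiv.apply_symm_apply f x

lemma PInv.compl {f : Perm X} {S : Set X} (h : PInv f S) : PInv f Sᶜ := fun a => by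
  simp [mem_compl_iff, h a]

lemma PInv.perm_inv {f : Perm X} {S : Set X} (h : PInv f S) : PInv f⁻¹ S := fun a => by
  have h2 := h (f⁻¹ a)
  simp only [Equiv.Perm.apply_inv_self] at h2
  exact h2.symm

lemma PInv.mul {f g : Perm X} {S : Set X} (hf : PInv f S) (hg : PInv g S) :
    PInv (f * g) S := fun a => by
  rw [Equiv.Perm.mul_apply]
  exact (hg a).trans (hf (g a))

lemma PInv.image_eq {f : Perm X} {S : Set X} (h : PInv f S) : f '' S = S := by
  ext a
  constructor
  · rintro ⟨b, hb, rfl⟩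
    exact (h b).mp hb
  · intro ha
    exact ⟨f⁻¹ a, (h.perm_inv a).mp ha, by simp⟩

lemma PInv.union {f : Perm X} {S T : Set X} (hS : PInv f S) (hT : PInv f T) :
    PInv f (S ∪ T) := fun a => by
  simp only [mem_union]
  exact or_congr (hS a) (hT a)

lemma pinv_of_image (f : Perm X) (S : Set X) (h : f '' S = S) : PInv f S := by
  intro a
  constructor
  · intro ha
    rw [← h]
    exact ⟨a, ha, rfl⟩
  · intro ha
    rw [← h] at ha
    obtain ⟨b, hb, hba⟩ := ha
    rwa [← f.injective hba]

@[simp] lemma res_apply (f : Perm X) {S : Set X} (h : ∀ a, a ∈ S ↔ f a ∈ S)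
    (a : ↥S) : ((f.subtypePerm (fun a => (h a).symm) a : ↥S) : X) = f a := rfl

lemma subtypePerm_congr {f g : Perm X} {S : Set X} (hf : ∀ a, a ∈ S ↔ f a ∈ S)
    (hg : ∀ a, a ∈ S ↔ g a ∈ S) (h : ∀ a ∈ S, f a = g a) :
    f.subtypePerm (fun a => (hf a).symm) = g.subtypePerm (fun a => (hg a).symm) := by
  apply Equiv.ext
  rintro ⟨a, ha⟩
  exact Subtype.ext (h a ha)

lemma pconj_split (f : Perm X) (S : Set X) (hS : PInv f S) :
    PConj (Equiv.sumCongr (f.subtypePerm hS.sym) (f.subtypePerm hS.compl.sym)) f := by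
  classical
  refine ⟨Equiv.Set.sumCompl S, ?_⟩
  rintro (⟨a, ha⟩ | ⟨a, ha⟩) <;> simp

lemma pconj_union_split (f : Perm X) (S T : Set X) (hdisj : Disjoint S T)
    (hS : PInv f S) (hT : PInv f T) :
    PConj (f.subtypePerm (hS.union hT).sym) (Equiv.sumCongr (f.subtypePerm hS.sym) (f.subtypePerm hT.sym)) := by
  classical
  refine ⟨Equiv.Set.union hdisj, ?_⟩
  rintro ⟨a, ha⟩
  rcases (mem_union a S T).mp ha with h | h
  · have hfa : f a ∈ S := (hS a).mp h
    have e1 : Equiv.Set.union hdisj ⟨f a, (mem_union _ _ _).mpr (Or.inl hfa)⟩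
        = Sum.inl ⟨f a, hfa⟩ := Equiv.Set.union_apply_left hdisj hfa
    have e2 : Equiv.Set.union hdisj ⟨a, ha⟩ = Sum.inl ⟨a, h⟩ := Equiv.Set.union_apply_left hdisj h
    rw [show (f.subtypePerm (hS.union hT).sym) ⟨a, ha⟩
        = ⟨f a, (mem_union _ _ _).mpr (Or.inl hfa)⟩ from rfl, e1, e2]
    rfl
  · have hfa : f a ∈ T := (hT a).mp h
    have hna : a ∉ S := fun hc => (hdisj.le_bot ⟨hc, h⟩ : a ∈ (∅ : Set X))
    have hnfa : f a ∉ S := fun hc => (hdisj.le_bot ⟨hc, hfa⟩ : f a ∈ (∅ : Set X))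
    have e1 : Equiv.Set.union hdisj ⟨f a, (mem_union _ _ _).mpr (Or.inr hfa)⟩
        = Sum.inr ⟨f a, hfa⟩ := Equiv.Set.union_apply_right hdisj hfa
    have e2 : Equiv.Set.union hdisj ⟨a, ha⟩ = Sum.inr ⟨a, h⟩ := Equiv.Set.union_apply_right hdisj h
    rw [show (f.subtypePerm (hS.union hT).sym) ⟨a, ha⟩
        = ⟨f a, (mem_union _ _ _).mpr (Or.inr hfa)⟩ from rfl, e1, e2]
    rfl

/-- restriction of a restriction -/
lemma pconj_restr2 (f : Perm X) (S T : Set X) (hTS : T ⊆ S) (hS : PInv f S)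
    (hT : PInv f T) :
    PConj ((f.subtypePerm hS.sym).subtypePerm
      (p := fun a : ↥S => (a : X) ∈ T) (fun a => (hT a).symm)) (f.subtypePerm hT.sym) := by
  refine ⟨⟨fun a => ⟨a.1.1, a.2⟩, fun t => ⟨⟨t.1, hTS t.2⟩, t.2⟩, ?_, ?_⟩, ?_⟩
  · rintro ⟨⟨a, haS⟩, haT⟩; rfl
  · rintro ⟨a, haT⟩; rfl
  · rintro ⟨⟨a, haS⟩, haT⟩; rfl

/-- restriction along a conjugation -/
lemma pconj_conj_restrict (f c : Perm X) (S : Set X) (hS : PInv f S)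
    (hS' : PInv (c⁻¹ * f * c) (⇑c ⁻¹' S)) :
    PConj ((c⁻¹ * f * c).subtypePerm hS'.sym) (f.subtypePerm hS.sym) := by
  refine ⟨⟨fun a => ⟨c a.1, a.2⟩, fun s => ⟨c⁻¹ s.1, by simp [Set.mem_preimage, s.2]⟩, ?_, ?_⟩, ?_⟩
  · rintro ⟨a, ha⟩; simp
  · rintro ⟨s, hs⟩; simp
  · rintro ⟨a, ha⟩
    simp [Equiv.Perm.mul_apply]

lemma FullPerm.ofInvariant {I : Type u} {f : Perm X} {S : Set X} (hS : PInv f S)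
    (h1 : FullPerm I (f.subtypePerm hS.sym)) (hI : ℵ₀ ≤ #I) (hX : #X ≤ #I) : FullPerm I f := by
  have h2 : FullPerm I (Equiv.sumCongr (f.subtypePerm hS.sym) (f.subtypePerm hS.compl.sym)) :=
    h1.sum_junk _ hI ((Cardinal.mk_subtype_le _).trans hX)
  exact FullPerm.ofPConj (pconj_split f S hS).symm h2

lemma card_sandwich {κ : Cardinal.{u}} {S T : Set X} (hTS : T ⊆ S) (hT : #↥T = κ)
    (hS : #↥S ≤ κ) : #↥S = κ :=
  le_antisymm hS (hT ▸ Cardinal.mk_le_mk_of_subset hTS)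

def subSubEquiv {S T : Set X} (hST : S ⊆ T) : {a : ↥T // (a : X) ∈ S} ≃ ↥S where
  toFun a := ⟨a.1.1, a.2⟩
  invFun s := ⟨⟨s.1, hST s.2⟩, s.2⟩
  left_inv := by rintro ⟨⟨a, haT⟩, haS⟩; rfl
  right_inv := by rintro ⟨a, haS⟩; rfl

def subDiffEquiv (S T : Set X) : {a : ↥T // (a : X) ∉ S} ≃ ↥(T \ S) where
  toFun a := ⟨a.1.1, a.1.2, a.2⟩
  invFun s := ⟨⟨s.1, s.2.1⟩, s.2.2⟩
  left_inv := by rintro ⟨⟨a, haT⟩, haS⟩; rfl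
  right_inv := by rintro ⟨a, haS⟩; rfl

end Helpers

/-! ### Realizers and the central gadget -/

section Gadget

variable {Ω : Type u}

/-- `f` realizes `σ` on `S` (controlled on `S`, garbage elsewhere). -/
structure Realizes (S : Set Ω) (σ : Perm ↥S) (f : Perm Ω) : Prop where
  inv : PInv f S
  eq : ∀ a : ↥S, f a = (σ a : Ω)

lemma Realizes.perm_inv {S : Set Ω} {σ : Perm ↥S} {f : Perm Ω} (h : Realizes S σ f) :
    Realizes S σ⁻¹ f⁻¹ := by
  refine ⟨h.inv.perm_inv, fun a => ?_⟩
  have h1 : f ((σ⁻¹ a : ↥S) : Ω) = ((σ (σ⁻¹ a) : ↥S) : Ω) := h.eq (σ⁻¹ a)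
  rw [Equiv.Perm.apply_inv_self] at h1
  rw [← h1]
  simp

lemma pinv_of_fixes {f : Perm Ω} {S : Set Ω} (h : ∀ a ∈ S, f a = a) : PInv f S := by
  intro a
  constructor
  · intro ha
    rw [h a ha]; exact ha
  · intro ha
    have h2 := h (f a) ha
    have h3 := f.injective h2
    rwa [← h3]

lemma gadget (A₀ C B M₁ M₂ : Set Ω) (x : Perm Ω) (U : Set (Perm Ω))
    (hκ : ℵ₀ ≤ #Ω)
    (hxx : x * x = 1)
    (hdA₀C : Disjoint A₀ C) (hdCB : Disjoint C B)
    (hcA₀ : #↥A₀ = #Ω) (hcC : #↥C = #Ω)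
    (hA₀M₁ : A₀ ⊆ M₁) (hCM₁ : C ⊆ M₁)
    (hM₁B : ∀ ω, ω ∈ M₁ ↔ ω ∉ B)
    (hM₂A₀ : ∀ ω, ω ∈ M₂ ↔ ω ∉ A₀)
    (hgetU : ∀ σ : Perm ↥M₁, ∃ u ∈ U, Realizes M₁ σ u)
    (hgetV : ∀ τ : Perm ↥M₂, ∃ u ∈ U, Realizes M₂ τ (x * u * x))
    (K : Perm Ω)
    (Z₁ Z₂ : Set Ω) (hZ₁C : Z₁ ⊆ C) (hZ₂C : Z₂ ⊆ C) (hZd : Disjoint Z₁ Z₂)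
    (hZ₁fix : ∀ z ∈ Z₁, K z = z) (hZ₁card : #↥Z₁ = #Ω)
    (hZ₂inv : PInv K Z₂) (hZ₂full : FullPerm Ω (K.subtypePerm hZ₂inv.sym)) :
    ∃ u₂ u₃ u₄, u₂ ∈ U ∧ u₃ ∈ U ∧ u₄ ∈ U ∧
      K = u₂ * (x * u₃ * x) * u₄ * (x * u₃⁻¹ * x) * u₂⁻¹ := by
  classical
  have hxinv : x⁻¹ = x := by
    rw [← mul_one x⁻¹, ← hxx, ← mul_assoc, inv_mul_cancel, one_mul]
  -- cardinal bound for every set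
  have hle : ∀ S : Set Ω, #↥S ≤ #Ω := fun S => Cardinal.mk_set_le S
  have hleM : ∀ P : ↥M₁ → Prop, #{a : ↥M₁ // P a} ≤ #Ω :=
    fun P => (Cardinal.mk_subtype_le P).trans (hle M₁)
  have hleM₂ : ∀ P : ↥M₂ → Prop, #{a : ↥M₂ // P a} ≤ #Ω :=
    fun P => (Cardinal.mk_subtype_le P).trans (hle M₂)
  -- Step 1 : σ₂ mapping the A₀-part of M₁ onto the Z₁-part
  obtain ⟨σ₂, hσ₂⟩ : ∃ σ₂ : Perm ↥M₁, ∀ a : ↥M₁, (a : Ω) ∈ A₀ ↔ (σ₂ a : Ω) ∈ Z₁ := by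
    apply exists_perm_iff ({a : ↥M₁ | (a : Ω) ∈ A₀}) ({a : ↥M₁ | (a : Ω) ∈ Z₁})
    · calc #↥{a : ↥M₁ | (a : Ω) ∈ A₀} = #↥A₀ := Cardinal.mk_congr (subSubEquiv hA₀M₁)
        _ = #Ω := hcA₀
        _ = #↥Z₁ := hZ₁card.symm
        _ = #↥{a : ↥M₁ | (a : Ω) ∈ Z₁} := (Cardinal.mk_congr (subSubEquiv (hZ₁C.trans hCM₁))).symm
    · -- complements both have size #Ω
      have h1 : #↥(M₁ \ A₀) = #Ω := by
        refine card_sandwich (T := C) ?_ hcC (hle _)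
        intro c hc
        exact ⟨hCM₁ hc, fun hca => (hdA₀C.le_bot ⟨hca, hc⟩ : c ∈ (∅ : Set Ω))⟩
      have h2 : #↥(M₁ \ Z₁) = #Ω := by
        refine card_sandwich (T := A₀) ?_ hcA₀ (hle _)
        intro a ha
        exact ⟨hA₀M₁ ha, fun haz => (hdA₀C.le_bot ⟨ha, hZ₁C haz⟩ : a ∈ (∅ : Set Ω))⟩
      calc #↥({a : ↥M₁ | (a : Ω) ∈ A₀}ᶜ) = #↥(M₁ \ A₀) := Cardinal.mk_congr (subDiffEquiv A₀ M₁)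
        _ = #Ω := h1
        _ = #↥(M₁ \ Z₁) := h2.symm
        _ = #↥({a : ↥M₁ | (a : Ω) ∈ Z₁}ᶜ) := (Cardinal.mk_congr (subDiffEquiv Z₁ M₁)).symm
  obtain ⟨u₂, hu₂U, hu₂⟩ := hgetU σ₂
  -- Step 2 : L = u₂⁻¹ K u₂ fixes A₀ pointwise
  set L : Perm Ω := u₂⁻¹ * K * u₂ with hL
  have hLfix : ∀ a ∈ A₀, L a = a := by
    intro a ha
    have haM : a ∈ M₁ := hA₀M₁ ha
    have h1 : u₂ a = ((σ₂ ⟨a, haM⟩ : ↥M₁) : Ω) := hu₂.eq ⟨a, haM⟩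
    have h2 : u₂ a ∈ Z₁ := by rw [h1]; exact (hσ₂ ⟨a, haM⟩).mp ha
    have h3 : K (u₂ a) = u₂ a := hZ₁fix _ h2
    show (u₂⁻¹ * K * u₂) a = a
    simp [Equiv.Perm.mul_apply, h3]
  have hLA₀ : PInv L A₀ := pinv_of_fixes hLfix
  have hLM₂ : PInv L M₂ := by
    intro a
    rw [hM₂A₀ a, hM₂A₀ (L a)]
    exact not_iff_not.mpr (hLA₀ a)
  set lam : Perm ↥M₂ := L.subtypePerm hLM₂.sym with hlam
  -- Step 3: fullness of lam
  have hZ₂M₂ : ∀ a : Ω, a ∈ ⇑u₂ ⁻¹' Z₂ → a ∈ M₂ := by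
    intro a ha
    rw [hM₂A₀ a]
    intro haA₀
    have haM : a ∈ M₁ := hA₀M₁ haA₀
    have h1 : u₂ a = ((σ₂ ⟨a, haM⟩ : ↥M₁) : Ω) := hu₂.eq ⟨a, haM⟩
    have h2 : u₂ a ∈ Z₁ := by rw [h1]; exact (hσ₂ ⟨a, haM⟩).mp haA₀
    exact (hZd.le_bot ⟨h2, ha⟩ : u₂ a ∈ (∅ : Set Ω))
  have hpre : PInv L (⇑u₂ ⁻¹' Z₂) := by
    intro a
    show u₂ a ∈ Z₂ ↔ u₂ (L a) ∈ Z₂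
    have : u₂ (L a) = K (u₂ a) := by
      show u₂ ((u₂⁻¹ * K * u₂) a) = K (u₂ a)
      simp [Equiv.Perm.mul_apply]
    rw [this]
    exact hZ₂inv (u₂ a)
  have hfullpre : FullPerm Ω (L.subtypePerm hpre.sym) := by
    apply FullPerm.ofPConj _ hZ₂full
    exact pconj_conj_restrict K u₂ Z₂ hZ₂inv hpre
  have hpreM₂ : ∀ a : ↥M₂, ((a : Ω) ∈ ⇑u₂ ⁻¹' Z₂) ↔ ((lam a : Ω) ∈ ⇑u₂ ⁻¹' Z₂) :=
    fun a => hpre (a : Ω)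
  have hlamfull : FullPerm Ω lam := by
    refine FullPerm.ofInvariant (S := {a : ↥M₂ | (a : Ω) ∈ ⇑u₂ ⁻¹' Z₂}) hpreM₂ ?_ hκ (hle M₂)
    refine FullPerm.ofPConj ?_ hfullpre
    exact pconj_restr2 L M₂ (⇑u₂ ⁻¹' Z₂) hZ₂M₂ hLM₂ hpre
  -- Step 4: u₄, the controlled full permutation supported on C
  obtain ⟨s₄, hs₄⟩ : ∃ s₄ : Perm ↥C, FullPerm Ω s₄ := exists_fullPerm hκ hcC
  set W : Perm Ω := Equiv.Perm.ofSubtype s₄ with hW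
  have hWC : ∀ a (ha : a ∈ C), W a = ((s₄ ⟨a, ha⟩ : ↥C) : Ω) := by
    intro a ha
    exact Equiv.Perm.ofSubtype_apply_of_mem s₄ ha
  have hWnC : ∀ a, a ∉ C → W a = a := by
    intro a ha
    exact Equiv.Perm.ofSubtype_apply_of_not_mem s₄ ha
  have hWCinv : PInv W C := by
    intro a
    constructor
    · intro ha
      rw [Equiv.Perm.ofSubtype_apply_of_mem s₄ ha]
      exact (s₄ ⟨a, ha⟩).2
    · intro ha
      by_contra hc
      rw [hWnC a hc] at ha
      exact hc ha
  have hWM₁ : PInv W M₁ := by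
    intro a
    by_cases ha : a ∈ C
    · constructor
      · intro _
        exact hCM₁ ((hWCinv a).mp ha)
      · intro _
        exact hCM₁ ha
    · rw [hWnC a ha]
  set σ₄ : Perm ↥M₁ := W.subtypePerm hWM₁.sym with hσ₄
  obtain ⟨u₄, hu₄U, hu₄⟩ := hgetU σ₄
  have hu₄fixA₀ : ∀ a ∈ A₀, u₄ a = a := by
    intro a ha
    have haM : a ∈ M₁ := hA₀M₁ ha
    have h1 : u₄ a = ((σ₄ ⟨a, haM⟩ : ↥M₁) : Ω) := hu₄.eq ⟨a, haM⟩
    rw [h1]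
    show W a = a
    exact hWnC a (fun hc => (hdA₀C.le_bot ⟨ha, hc⟩ : a ∈ (∅ : Set Ω)))
  have hu₄A₀ : PInv u₄ A₀ := pinv_of_fixes hu₄fixA₀
  have hu₄M₂ : PInv u₄ M₂ := by
    intro a
    rw [hM₂A₀ a, hM₂A₀ (u₄ a)]
    exact not_iff_not.mpr (hu₄A₀ a)
  have hu₄C : ∀ a ∈ C, u₄ a = W a := by
    intro a ha
    exact hu₄.eq ⟨a, hCM₁ ha⟩
  have hu₄Cinv : PInv u₄ C := by
    intro a
    constructor
    · intro ha
      rw [hu₄C a ha]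
      exact (hWCinv a).mp ha
    · intro ha
      by_cases hb : a ∈ C
      · exact hb
      · exfalso
        by_cases hA : a ∈ A₀
        · rw [hu₄fixA₀ a hA] at ha
          exact (hdA₀C.le_bot ⟨hA, ha⟩ : a ∈ (∅ : Set Ω))
        · -- a ∈ B, so u₄ a ∈ B, contradiction with C
          have haB : a ∉ M₁ := by
            intro haM
            have h1 : u₄ a = ((σ₄ ⟨a, haM⟩ : ↥M₁) : Ω) := hu₄.eq ⟨a, haM⟩
            rw [h1] at ha
            have : W a = a := hWnC a hb
            have h2 : ((σ₄ ⟨a, haM⟩ : ↥M₁) : Ω) = W a := rfl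
            rw [h2, this] at ha
            exact hb ha
          have : u₄ a ∉ M₁ := fun hc => haB ((hu₄.inv a).mpr hc)
          rw [hM₁B] at this
          push_neg at this
          exact (hdCB.le_bot ⟨ha, this⟩ : u₄ a ∈ (∅ : Set Ω))
  set w₄ : Perm ↥M₂ := u₄.subtypePerm hu₄M₂.sym with hw₄
  have hCM₂ : C ⊆ M₂ := by
    intro c hc
    rw [hM₂A₀]
    exact fun hca => (hdA₀C.le_bot ⟨hca, hc⟩ : c ∈ (∅ : Set Ω))
  have hu₄resC : u₄.subtypePerm hu₄Cinv.sym = s₄ := by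
    apply Equiv.ext
    rintro ⟨a, ha⟩
    apply Subtype.ext
    show u₄ a = ((s₄ ⟨a, ha⟩ : ↥C) : Ω)
    rw [hu₄C a ha, hWC a ha]
  have hw₄full : FullPerm Ω w₄ := by
    have hCres : ∀ a : ↥M₂, ((a : Ω) ∈ C) ↔ ((w₄ a : Ω) ∈ C) := fun a => hu₄Cinv (a : Ω)
    refine FullPerm.ofInvariant (S := {a : ↥M₂ | (a : Ω) ∈ C}) hCres ?_ hκ (hle M₂)
    refine FullPerm.ofPConj (pconj_restr2 u₄ M₂ C hCM₂ hu₄M₂ hu₄Cinv) ?_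
    rw [hu₄resC]
    exact hs₄
  -- Step 5: conjugating w₄ to lam inside M₂
  obtain ⟨τ₃, hτ₃⟩ : ∃ e : ↥M₂ ≃ ↥M₂, ∀ a, e (w₄ a) = lam (e a) :=
    FullPerm.pconj_of_full hw₄full hlamfull
  obtain ⟨u₃, hu₃U, hv₃⟩ := hgetV τ₃
  set v₃ : Perm Ω := x * u₃ * x with hv₃def
  -- Step 6: L = v₃ * u₄ * v₃⁻¹
  have hv₃A₀ : PInv v₃ A₀ := by
    have h1 : PInv v₃ M₂ := hv₃.inv
    intro a
    have h2 := h1 a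
    rw [hM₂A₀ a, hM₂A₀ (v₃ a)] at h2
    exact not_iff_not.mp h2
  have hkey : L = v₃ * u₄ * v₃⁻¹ := by
    apply Equiv.ext
    intro ω
    by_cases hω : ω ∈ M₂
    · -- controlled part
      have h1 : v₃⁻¹ ω = ((τ₃⁻¹ ⟨ω, hω⟩ : ↥M₂) : Ω) := hv₃.perm_inv.eq ⟨ω, hω⟩
      have h2 : (τ₃⁻¹ ⟨ω, hω⟩ : ↥M₂).1 ∈ M₂ := (τ₃⁻¹ ⟨ω, hω⟩).2
      have h3 : u₄ ((τ₃⁻¹ ⟨ω, hω⟩ : ↥M₂) : Ω) = ((w₄ (τ₃⁻¹ ⟨ω, hω⟩) : ↥M₂) : Ω) := rfl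
      have h4 : v₃ ((w₄ (τ₃⁻¹ ⟨ω, hω⟩) : ↥M₂) : Ω) = ((τ₃ (w₄ (τ₃⁻¹ ⟨ω, hω⟩)) : ↥M₂) : Ω) :=
        hv₃.eq _
      show L ω = v₃ (u₄ (v₃⁻¹ ω))
      rw [h1, h3, h4, hτ₃]
      have h5 : τ₃ (τ₃⁻¹ ⟨ω, hω⟩) = ⟨ω, hω⟩ := Equiv.Perm.apply_inv_self τ₃ ⟨ω, hω⟩
      rw [h5]
      rfl
    · -- ω ∈ A₀
      have hωA₀ : ω ∈ A₀ := by
        by_contra hc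
        exact hω ((hM₂A₀ ω).mpr hc)
      have h1 : v₃⁻¹ ω ∈ A₀ := (hv₃A₀.perm_inv ω).mp hωA₀
      show L ω = v₃ (u₄ (v₃⁻¹ ω))
      rw [hLfix ω hωA₀, hu₄fixA₀ _ h1]
      simp
  refine ⟨u₂, u₃, u₄, hu₂U, hu₃U, hu₄U, ?_⟩
  have hKL : K = u₂ * L * u₂⁻¹ := by
    rw [hL]
    group
  rw [hKL, hkey, hv₃def]
  have hv₃inv : (x * u₃ * x)⁻¹ = x * u₃⁻¹ * x := by
    rw [mul_inv_rev, mul_inv_rev, hxinv]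
    rw [mul_assoc]
  rw [hv₃inv]
  group

end Gadget

/-! ### The master lemma -/

section Master

variable {Ω : Type u}

def subInterEquiv (S T : Set Ω) : {a : ↥T // (a : Ω) ∈ S} ≃ ↥(T ∩ S) where
  toFun a := ⟨a.1.1, a.1.2, a.2⟩
  invFun s := ⟨⟨s.1, s.2.1⟩, s.2.2⟩
  left_inv := by rintro ⟨⟨a, h1⟩, h2⟩; rfl
  right_inv := by rintro ⟨a, h1, h2⟩; rfl

lemma extendPerm_iff {S T : Set Ω} (e₀ : ↥S ≃ ↥T) (e₁ : ↥(Sᶜ) ≃ ↥(Tᶜ)) (a : Ω) :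
    a ∈ S ↔ extendPerm S T e₀ e₁ a ∈ T := by
  by_cases h : a ∈ S
  · rw [extendPerm_mem S T e₀ e₁ h]
    exact iff_of_true h (e₀ ⟨a, h⟩).2
  · rw [extendPerm_not_mem S T e₀ e₁ h]
    exact iff_of_false h (e₁ ⟨a, h⟩).2

lemma pinv_flip {f : Perm Ω} {M A : Set Ω} (hf : PInv f M)
    (hMA : ∀ ω, ω ∈ M ↔ ω ∉ A) : PInv f A := by
  intro a
  have h := hf a
  rw [hMA a, hMA (f a)] at h
  exact not_iff_not.mp h

lemma master (A₀ C B M₁ M₂ : Set Ω) (x : Perm Ω) (U : Set (Perm Ω))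
    (hκ : ℵ₀ ≤ #Ω) (hxx : x * x = 1)
    (hdA₀C : Disjoint A₀ C) (hdCB : Disjoint C B) (hdA₀B : Disjoint A₀ B)
    (hcA₀ : #↥A₀ = #Ω) (hcC : #↥C = #Ω) (hcB : #↥B = #Ω)
    (hM₁ : ∀ ω, ω ∈ M₁ ↔ ω ∈ A₀ ∨ ω ∈ C)
    (hM₂ : ∀ ω, ω ∈ M₂ ↔ ω ∈ C ∨ ω ∈ B)
    (hcover : ∀ ω : Ω, ω ∈ A₀ ∨ ω ∈ C ∨ ω ∈ B)
    (hUinv : ∀ u ∈ U, u⁻¹ ∈ U)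
    (hgetU : ∀ σ : Perm ↥M₁, ∃ u ∈ U, Realizes M₁ σ u)
    (hgetV : ∀ τ : Perm ↥M₂, ∃ u ∈ U, Realizes M₂ τ (x * u * x))
    (g : Perm Ω)
    (hg : #↥(M₁ \ ⇑g ⁻¹' A₀) = #Ω) :
    ∃ u₁ u₂ u₃ u₄ u₅ u₆ u₇ u₈ u₉,
      u₁ ∈ U ∧ u₂ ∈ U ∧ u₃ ∈ U ∧ u₄ ∈ U ∧ u₅ ∈ U ∧ u₆ ∈ U ∧ u₇ ∈ U ∧ u₈ ∈ U ∧ u₉ ∈ U ∧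
      g = (x*u₁*x) * u₂ * (x*u₃*x) * u₄ * (x*u₅*x) * u₆ * (x*u₇*x) * u₈ * u₉ := by
  classical
  have hle : ∀ S : Set Ω, #↥S ≤ #Ω := fun S => Cardinal.mk_set_le S
  have hM₁B : ∀ ω, ω ∈ M₁ ↔ ω ∉ B := by
    intro ω
    rw [hM₁ ω]
    constructor
    · rintro (h | h) hB
      · exact (hdA₀B.le_bot ⟨h, hB⟩ : ω ∈ (∅ : Set Ω))
      · exact (hdCB.le_bot ⟨h, hB⟩ : ω ∈ (∅ : Set Ω))
    · intro hB
      rcases hcover ω with h | h | h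
      · exact Or.inl h
      · exact Or.inr h
      · exact absurd h hB
  have hM₂A₀ : ∀ ω, ω ∈ M₂ ↔ ω ∉ A₀ := by
    intro ω
    rw [hM₂ ω]
    constructor
    · rintro (h | h) hA
      · exact (hdA₀C.le_bot ⟨hA, h⟩ : ω ∈ (∅ : Set Ω))
      · exact (hdA₀B.le_bot ⟨hA, h⟩ : ω ∈ (∅ : Set Ω))
    · intro hA
      rcases hcover ω with h | h | h
      · exact absurd h hA
      · exact Or.inl h
      · exact Or.inr h
  have hA₀M₁ : A₀ ⊆ M₁ := fun a ha => (hM₁ a).mpr (Or.inl ha)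
  have hCM₁ : C ⊆ M₁ := fun a ha => (hM₁ a).mpr (Or.inr ha)
  have hCM₂ : C ⊆ M₂ := fun a ha => (hM₂ a).mpr (Or.inl ha)
  have hBM₂ : B ⊆ M₂ := fun a ha => (hM₂ a).mpr (Or.inr ha)
  set E : Set Ω := ⇑g ⁻¹' A₀ with hE
  -- u₉ : an identity realizer
  obtain ⟨u₉, hu₉U, hu₉⟩ := hgetU 1
  have hu₉id : ∀ a ∈ M₁, u₉ a = a := fun a ha => by
    have := hu₉.eq ⟨a, ha⟩; simpa using this
  have hu₉inv : ∀ a ∈ M₁, u₉⁻¹ a = a := fun a ha => by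
    have := hu₉.perm_inv.eq ⟨a, ha⟩; simpa using this
  -- the target T' for stashing E ∩ M₁ inside A₀
  obtain ⟨T₀, hT₀A₀, hT₀c, hT₀rest⟩ := exists_split A₀ hκ hcA₀
  obtain ⟨sT, hsT⟩ := Cardinal.le_mk_iff_exists_set.mp
    ((hle (M₁ ∩ E)).trans_eq hT₀c.symm)
  set T' : Set Ω := Subtype.val '' sT with hT'
  have hT'T₀ : T' ⊆ T₀ := by rintro _ ⟨t, _, rfl⟩; exact t.2
  have hT'A₀ : T' ⊆ A₀ := hT'T₀.trans hT₀A₀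
  have hT'c : #↥T' = #↥(M₁ ∩ E) := by
    rw [hT', Cardinal.mk_image_eq Subtype.val_injective, hsT]
  -- σ₈ : moves the E-part of M₁ into T'
  obtain ⟨σ₈, hσ₈⟩ : ∃ σ₈ : Perm ↥M₁, ∀ a : ↥M₁, (a : Ω) ∈ E ↔ (σ₈ a : Ω) ∈ T' := by
    apply exists_perm_iff ({a : ↥M₁ | (a : Ω) ∈ E}) ({a : ↥M₁ | (a : Ω) ∈ T'})
    · calc #↥{a : ↥M₁ | (a : Ω) ∈ E} = #↥(M₁ ∩ E) := Cardinal.mk_congr (subInterEquiv E M₁)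
        _ = #↥T' := hT'c.symm
        _ = #↥{a : ↥M₁ | (a : Ω) ∈ T'} :=
          (Cardinal.mk_congr (subSubEquiv (hT'A₀.trans hA₀M₁))).symm
    · have h2 : #↥(M₁ \ T') = #Ω := by
        refine card_sandwich (T := C) ?_ hcC (hle _)
        intro c hc
        exact ⟨hCM₁ hc, fun hct => (hdA₀C.le_bot ⟨hT'A₀ hct, hc⟩ : c ∈ (∅ : Set Ω))⟩
      calc #↥({a : ↥M₁ | (a : Ω) ∈ E}ᶜ) = #↥(M₁ \ E) := Cardinal.mk_congr (subDiffEquiv E M₁)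
        _ = #Ω := hg
        _ = #↥(M₁ \ T') := h2.symm
        _ = #↥({a : ↥M₁ | (a : Ω) ∈ T'}ᶜ) := (Cardinal.mk_congr (subDiffEquiv T' M₁)).symm
  obtain ⟨u₈, hu₈U, hu₈⟩ := hgetU σ₈
  -- split C
  obtain ⟨C₁, hC₁C, hC₁c, hC₂c⟩ := exists_split C hκ hcC
  -- the image F of E
  set F : Set Ω := ⇑(u₈ * u₉) '' E with hF
  have hFmem : ∀ ω ∈ F, ω ∈ T' ∨ (ω ∈ B ∧ ω ∉ M₁) := by
    rintro _ ⟨e, he, rfl⟩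
    by_cases h1 : e ∈ M₁
    · left
      have h2 : (u₈ * u₉) e = u₈ e := by
        rw [Equiv.Perm.mul_apply, hu₉id e h1]
      rw [h2, hu₈.eq ⟨e, h1⟩]
      exact (hσ₈ ⟨e, h1⟩).mp he
    · right
      have h2 : u₉ e ∉ M₁ := fun hc => h1 ((hu₉.inv e).mpr hc)
      have h3 : (u₈ * u₉) e ∉ M₁ := by
        rw [Equiv.Perm.mul_apply]
        exact fun hc => h2 ((hu₈.inv (u₉ e)).mpr hc)
      refine ⟨?_, h3⟩
      by_contra hB
      exact h3 ((hM₁B _).mpr hB)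
  -- S₇ and τ₇
  set S₇ : Set Ω := (F ∩ B) ∪ C₁ with hS₇
  have hS₇M₂ : S₇ ⊆ M₂ := by
    rintro a (⟨_, hB⟩ | hC₁)
    · exact hBM₂ hB
    · exact hCM₂ (hC₁C hC₁)
  obtain ⟨τ₇, hτ₇⟩ : ∃ τ₇ : Perm ↥M₂, ∀ a : ↥M₂, (a : Ω) ∈ S₇ ↔ (τ₇ a : Ω) ∈ C := by
    apply exists_perm_iff ({a : ↥M₂ | (a : Ω) ∈ S₇}) ({a : ↥M₂ | (a : Ω) ∈ C})
    · have h1 : #↥(M₂ ∩ S₇) = #Ω := by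
        refine card_sandwich (T := C₁) ?_ hC₁c (hle _)
        intro c hc
        exact ⟨hCM₂ (hC₁C hc), Or.inr hc⟩
      have h2 : #↥(M₂ ∩ C) = #Ω := by
        refine card_sandwich (T := C) ?_ hcC (hle _)
        intro c hc
        exact ⟨hCM₂ hc, hc⟩
      calc #↥{a : ↥M₂ | (a : Ω) ∈ S₇} = #↥(M₂ ∩ S₇) := Cardinal.mk_congr (subInterEquiv S₇ M₂)
        _ = #Ω := h1
        _ = #↥(M₂ ∩ C) := h2.symm
        _ = #↥{a : ↥M₂ | (a : Ω) ∈ C} := (Cardinal.mk_congr (subInterEquiv C M₂)).symm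
    · have h1 : #↥(M₂ \ S₇) = #Ω := by
        refine card_sandwich (T := C \ C₁) ?_ hC₂c (hle _)
        intro c hc
        refine ⟨hCM₂ hc.1, ?_⟩
        rintro (⟨_, hcB⟩ | hcC₁)
        · exact (hdCB.le_bot ⟨hc.1, hcB⟩ : c ∈ (∅ : Set Ω))
        · exact hc.2 hcC₁
      have h2 : #↥(M₂ \ C) = #Ω := by
        refine card_sandwich (T := B) ?_ hcB (hle _)
        intro b hb
        exact ⟨hBM₂ hb, fun hbc => (hdCB.le_bot ⟨hbc, hb⟩ : b ∈ (∅ : Set Ω))⟩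
      calc #↥({a : ↥M₂ | (a : Ω) ∈ S₇}ᶜ) = #↥(M₂ \ S₇) := Cardinal.mk_congr (subDiffEquiv S₇ M₂)
        _ = #Ω := h1
        _ = #↥(M₂ \ C) := h2.symm
        _ = #↥({a : ↥M₂ | (a : Ω) ∈ C}ᶜ) := (Cardinal.mk_congr (subDiffEquiv C M₂)).symm
  obtain ⟨u₇, hu₇U, hv₇⟩ := hgetV τ₇
  set v₇ : Perm Ω := x * u₇ * x with hv₇def
  have hv₇A₀ : PInv v₇ A₀ := pinv_flip hv₇.inv hM₂A₀
  -- P and q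
  set P : Perm Ω := v₇ * (u₈ * u₉) with hP
  set q : Perm Ω := g * P⁻¹ with hq
  have hPE : ∀ e ∈ E, P e ∈ M₁ := by
    intro e he
    by_cases h1 : e ∈ M₁
    · have h2 : P e = v₇ (u₈ e) := by
        have h0 : P e = v₇ (u₈ (u₉ e)) := by rw [hP]; rfl
        rw [h0, hu₉id e h1]
      have h3 : u₈ e ∈ T' := by
        rw [hu₈.eq ⟨e, h1⟩]
        exact (hσ₈ ⟨e, h1⟩).mp he
      have h4 : u₈ e ∈ A₀ := hT'A₀ h3
      rw [h2]
      exact hA₀M₁ ((hv₇A₀ _).mp h4)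
    · have h2 : (u₈ * u₉) e ∈ F := ⟨e, he, rfl⟩
      have h3 : (u₈ * u₉) e ∈ B ∧ (u₈ * u₉) e ∉ M₁ := by
        rcases hFmem _ h2 with h | h
        · exfalso
          have h4 : u₉ e ∉ M₁ := fun hc => h1 ((hu₉.inv e).mpr hc)
          have h5 : (u₈ * u₉) e ∉ M₁ := by
            rw [Equiv.Perm.mul_apply]
            exact fun hc => h4 ((hu₈.inv (u₉ e)).mpr hc)
          exact h5 (hA₀M₁ (hT'A₀ h))
        · exact h
      have h6 : (u₈ * u₉) e ∈ S₇ := Or.inl ⟨h2, h3.1⟩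
      have h7 : P e = v₇ ((u₈ * u₉) e) := by rw [hP, Equiv.Perm.mul_apply]
      rw [h7, hv₇.eq ⟨(u₈ * u₉) e, hS₇M₂ h6⟩]
      exact hCM₁ ((hτ₇ ⟨(u₈ * u₉) e, hS₇M₂ h6⟩).mp h6)
  set GW : Set Ω := ⇑q '' M₁ with hGW
  have hqmem : ∀ ω, ω ∈ M₁ ↔ q ω ∈ GW := by
    intro ω
    constructor
    · exact fun h => ⟨ω, h, rfl⟩
    · rintro ⟨b, hb, he⟩
      rwa [← q.injective he]
  have hA₀GW : A₀ ⊆ GW := by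
    intro a ha
    have he : g⁻¹ a ∈ E := by
      rw [hE, Set.mem_preimage]
      simpa using ha
    refine ⟨P (g⁻¹ a), hPE _ he, ?_⟩
    rw [hq]
    simp
  -- D and its key property
  set D : Set Ω := ⇑v₇ '' C₁ with hD
  have hDC : D ⊆ C := by
    rintro _ ⟨c₁, hc₁, rfl⟩
    have h1 : c₁ ∈ S₇ := Or.inr hc₁
    have h2 : c₁ ∈ M₂ := hS₇M₂ h1
    rw [hv₇.eq ⟨c₁, h2⟩]
    exact (hτ₇ ⟨c₁, h2⟩).mp h1
  have hDc : #↥D = #Ω := by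
    rw [hD, Cardinal.mk_image_eq v₇.injective]
    exact hC₁c
  have hqD : ∀ d ∈ D, q d ∈ GW ∧ q d ∉ A₀ := by
    rintro _ ⟨c₁, hc₁, rfl⟩
    have hdC : v₇ c₁ ∈ C := hDC ⟨c₁, hc₁, rfl⟩
    have hdGW : q (v₇ c₁) ∈ GW := (hqmem _).mp (hCM₁ hdC)
    refine ⟨hdGW, ?_⟩
    -- q d = g y with y ∉ E
    have hc₁M : c₁ ∈ M₁ := hCM₁ (hC₁C hc₁)
    have hPinvd : P⁻¹ (v₇ c₁) = u₉⁻¹ (u₈⁻¹ c₁) := by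
      rw [hP]
      simp [mul_inv_rev, Equiv.Perm.mul_apply]
    have hyM : u₈⁻¹ c₁ ∈ M₁ := (hu₈.inv.perm_inv c₁).mp hc₁M
    have hy9 : u₉⁻¹ (u₈⁻¹ c₁) = u₈⁻¹ c₁ := hu₉inv _ hyM
    have hyE : u₈⁻¹ c₁ ∉ E := by
      intro hyE
      have hsub : (⟨u₈⁻¹ c₁, hyM⟩ : ↥M₁) = σ₈⁻¹ ⟨c₁, hc₁M⟩ := by
        apply Subtype.ext
        exact hu₈.perm_inv.eq ⟨c₁, hc₁M⟩
      have h2 := (hσ₈ ⟨u₈⁻¹ c₁, hyM⟩).mp hyE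
      rw [hsub] at h2
      simp only [Equiv.Perm.apply_inv_self] at h2
      exact (hdA₀C.le_bot ⟨hT'A₀ h2, hC₁C hc₁⟩ : c₁ ∈ (∅ : Set Ω))
    have hqd : q (v₇ c₁) = g (u₈⁻¹ c₁) := by
      rw [hq, Equiv.Perm.mul_apply, hPinvd, hy9]
    rw [hqd]
    exact fun hc => hyE hc
  -- splits of D
  obtain ⟨D₁, hD₁D, hD₁c, hDrest⟩ := exists_split D hκ hDc
  obtain ⟨Z₁, hZ₁D₁, hZ₁c, hZ₂c⟩ := exists_split D₁ hκ hD₁c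
  set Z₂ : Set Ω := D₁ \ Z₁ with hZ₂def
  set Z : Set Ω := Z₁ ∪ Z₂ with hZdef
  have hZ₁Z₂ : Disjoint Z₁ Z₂ := Set.disjoint_left.mpr fun a ha h2 => h2.2 ha
  have hZD₁ : Z ⊆ D₁ := Set.union_subset hZ₁D₁ Set.diff_subset
  have hZD : Z ⊆ D := hZD₁.trans hD₁D
  have hZC : Z ⊆ C := hZD.trans hDC
  have hZ₁C : Z₁ ⊆ C := fun a ha => hZC (Or.inl ha)
  have hZ₂C : Z₂ ⊆ C := fun a ha => hZC (Or.inr ha)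
  set G₀ : Set Ω := GW \ A₀ with hG₀
  have hqZG₀ : ∀ z ∈ Z, q z ∈ G₀ := by
    intro z hz
    obtain ⟨h1, h2⟩ := hqD z (hZD hz)
    exact ⟨h1, h2⟩
  have hCZc : #↥(C \ Z) = #Ω := by
    refine card_sandwich (T := D \ D₁) ?_ hDrest (hle _)
    intro d hd
    exact ⟨hDC hd.1, fun hz => hd.2 (hZD₁ hz)⟩
  have hG₀Zc : #↥(G₀ \ ⇑q '' Z) = #Ω := by
    have himg : #↥(⇑q '' (D \ D₁)) = #Ω := by
      rw [Cardinal.mk_image_eq q.injective]; exact hDrest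
    refine card_sandwich (T := ⇑q '' (D \ D₁)) ?_ himg (hle _)
    rintro _ ⟨d, hd, rfl⟩
    refine ⟨⟨(hqD d hd.1).1, (hqD d hd.1).2⟩, ?_⟩
    rintro ⟨z, hz, he⟩
    exact hd.2 (hZD₁ (q.injective he ▸ hz))
  -- the full permutation s on Z₂
  obtain ⟨s, hsfull⟩ := exists_fullPerm (X := ↥Z₂) hκ hZ₂c
  have e₃ : ↥(C \ Z) ≃ ↥(G₀ \ ⇑q '' Z) := cardEquiv (hCZc.trans hG₀Zc.symm)
  classical
  set φ : Ω → Ω := fun ω =>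
    if h1 : ω ∈ Z₁ then q ω
    else if h2 : ω ∈ Z₂ then q ((s.symm ⟨ω, h2⟩ : ↥Z₂) : Ω)
    else if h3 : ω ∈ C \ Z then ((e₃ ⟨ω, h3⟩ : ↥(G₀ \ ⇑q '' Z)) : Ω)
    else ω
    with hφdef
  have hφZ₁ : ∀ ω (h : ω ∈ Z₁), φ ω = q ω := fun ω h => by
    simp only [hφdef]; rw [dif_pos h]
  have hφZ₂ : ∀ ω (h : ω ∈ Z₂), φ ω = q ((s.symm ⟨ω, h⟩ : ↥Z₂) : Ω) := fun ω h => by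
    have h1 : ω ∉ Z₁ := fun hc => (hZ₁Z₂.le_bot ⟨hc, h⟩ : ω ∈ (∅ : Set Ω))
    simp only [hφdef]; rw [dif_neg h1, dif_pos h]
  have hφCZ : ∀ ω (h : ω ∈ C \ Z), φ ω = ((e₃ ⟨ω, h⟩ : ↥(G₀ \ ⇑q '' Z)) : Ω) := fun ω h => by
    have h1 : ω ∉ Z₁ := fun hc => h.2 (Or.inl hc)
    have h2 : ω ∉ Z₂ := fun hc => h.2 (Or.inr hc)
    simp only [hφdef]; rw [dif_neg h1, dif_neg h2, dif_pos h]
  have hsmem : ∀ (z : ↥Z₂), ((z : Ω) ∈ Z₂) := fun z => z.2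
  have hφbij : Set.BijOn φ C G₀ := by
    refine ⟨?_, ?_, ?_⟩
    · -- MapsTo
      intro ω hω
      by_cases h1 : ω ∈ Z₁
      · rw [hφZ₁ ω h1]
        exact hqZG₀ ω (Or.inl h1)
      · by_cases h2 : ω ∈ Z₂
        · rw [hφZ₂ ω h2]
          exact hqZG₀ _ (Or.inr (s.symm ⟨ω, h2⟩).2)
        · have h3 : ω ∈ C \ Z := ⟨hω, fun hc => hc.elim h1 h2⟩
          rw [hφCZ ω h3]
          exact (e₃ ⟨ω, h3⟩).2.1
    · -- InjOn
      have hval : ∀ ω ∈ C, (φ ω ∈ ⇑q '' Z ∧ (∃ w ∈ Z, φ ω = q w ∧ ((ω ∈ Z₁ ∧ w = ω) ∨ (∃ h : ω ∈ Z₂, w = ((s.symm ⟨ω, h⟩ : ↥Z₂) : Ω))))) ∨ (ω ∈ C \ Z ∧ φ ω ∉ ⇑q '' Z) := by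
        intro ω hω
        by_cases h1 : ω ∈ Z₁
        · left
          rw [hφZ₁ ω h1]
          exact ⟨⟨ω, Or.inl h1, rfl⟩, ω, Or.inl h1, rfl, Or.inl ⟨h1, rfl⟩⟩
        · by_cases h2 : ω ∈ Z₂
          · left
            rw [hφZ₂ ω h2]
            refine ⟨⟨_, Or.inr (s.symm ⟨ω, h2⟩).2, rfl⟩, _, Or.inr (s.symm ⟨ω, h2⟩).2, rfl, ?_⟩
            exact Or.inr ⟨h2, rfl⟩
          · right
            have h3 : ω ∈ C \ Z := ⟨hω, fun hc => hc.elim h1 h2⟩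
            rw [hφCZ ω h3]
            exact ⟨h3, (e₃ ⟨ω, h3⟩).2.2⟩
      intro a ha b hb heq
      rcases hval a ha with ⟨haq, wa, hwa, hva, hca⟩ | ⟨ha3, hanq⟩ <;>
        rcases hval b hb with ⟨hbq, wb, hwb, hvb, hcb⟩ | ⟨hb3, hbnq⟩
      · -- both in Z-territory
        have hw : wa = wb := q.injective (by rw [← hva, ← hvb, heq])
        rcases hca with ⟨ha1, hwa1⟩ | ⟨ha2, hwa2⟩ <;> rcases hcb with ⟨hb1, hwb1⟩ | ⟨hb2, hwb2⟩
        · rw [← hwa1, ← hwb1]; exact hw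
        · exfalso
          have h3 : a ∈ Z₂ := by
            rw [← hwa1, hw, hwb2]; exact (s.symm ⟨b, hb2⟩).2
          exact ((hZ₁Z₂.le_bot ⟨ha1, h3⟩ : a ∈ (∅ : Set Ω))).elim
        · exfalso
          have h3 : b ∈ Z₂ := by
            rw [← hwb1, ← hw, hwa2]; exact (s.symm ⟨a, ha2⟩).2
          exact ((hZ₁Z₂.le_bot ⟨hb1, h3⟩ : b ∈ (∅ : Set Ω))).elim
        · rw [hwa2, hwb2] at hw
          have h1 : s.symm ⟨a, ha2⟩ = s.symm ⟨b, hb2⟩ := Subtype.ext hw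
          have h2 := congrArg s h1
          simp only [Equiv.apply_symm_apply] at h2
          exact congrArg Subtype.val h2
      · exact absurd (heq ▸ haq) hbnq
      · exact absurd (heq.symm ▸ hbq) hanq
      · -- both via e₃
        have h1 : e₃ ⟨a, ha3⟩ = e₃ ⟨b, hb3⟩ := by
          apply Subtype.ext
          rw [← hφCZ a ha3, ← hφCZ b hb3, heq]
        have h2 := e₃.injective h1
        exact congrArg Subtype.val h2
    · -- SurjOn
      intro b hb
      by_cases hb1 : b ∈ ⇑q '' Z₁
      · obtain ⟨z, hz, rfl⟩ := hb1
        exact ⟨z, hZ₁C hz, (hφZ₁ z hz)⟩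
      · by_cases hb2 : b ∈ ⇑q '' Z₂
        · obtain ⟨z, hz, rfl⟩ := hb2
          refine ⟨((s ⟨z, hz⟩ : ↥Z₂) : Ω), hZ₂C (s ⟨z, hz⟩).2, ?_⟩
          have h2 : s.symm ⟨((s ⟨z, hz⟩ : ↥Z₂) : Ω), (s ⟨z, hz⟩).2⟩ = ⟨z, hz⟩ := by
            rw [show (⟨((s ⟨z, hz⟩ : ↥Z₂) : Ω), (s ⟨z, hz⟩).2⟩ : ↥Z₂) = s ⟨z, hz⟩ from
              Subtype.ext rfl, Equiv.symm_apply_apply]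
          rw [hφZ₂ _ (s ⟨z, hz⟩).2, h2]
        · have hbn : b ∉ ⇑q '' Z := by
            intro hc
            rw [hZdef, Set.image_union] at hc
            exact hc.elim hb1 hb2
          refine ⟨((e₃.symm ⟨b, hb, hbn⟩ : ↥(C \ Z)) : Ω), (e₃.symm ⟨b, hb, hbn⟩).2.1, ?_⟩
          have h2 : (⟨((e₃.symm ⟨b, hb, hbn⟩ : ↥(C \ Z)) : Ω), (e₃.symm ⟨b, hb, hbn⟩).2⟩ :
              ↥(C \ Z)) = e₃.symm ⟨b, hb, hbn⟩ := Subtype.ext rfl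
          rw [hφCZ _ (e₃.symm ⟨b, hb, hbn⟩).2, h2, Equiv.apply_symm_apply]
  -- τ₁ from φ
  have hG₀M₂ : G₀ ⊆ M₂ := fun ω h => (hM₂A₀ ω).mpr h.2
  obtain ⟨e₀', he₀'⟩ : ∃ e : ↥C ≃ ↥G₀, ∀ (ω : ↥C), ((e ω : ↥G₀) : Ω) = φ ω :=
    ⟨Set.BijOn.equiv φ hφbij, fun ω => rfl⟩
  have hMC : #↥(M₂ \ C) = #Ω := by
    refine card_sandwich (T := B) ?_ hcB (hle _)
    intro bb hbb
    exact ⟨hBM₂ hbb, fun hbc => (hdCB.le_bot ⟨hbc, hbb⟩ : bb ∈ (∅ : Set Ω))⟩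
  have hMG₀ : #↥(M₂ \ G₀) = #Ω := by
    have hGWc : #↥(GWᶜ) = #Ω := by
      have h1 : GWᶜ = ⇑q '' (M₁ᶜ) := by
        rw [hGW, Set.image_compl_eq q.bijective]
      rw [h1, Cardinal.mk_image_eq q.injective]
      refine card_sandwich (T := B) ?_ hcB (hle _)
      intro bb hbb
      exact fun hc => (hM₁B bb).mp hc hbb
    refine card_sandwich (T := GWᶜ) ?_ hGWc (hle _)
    intro ω hω
    have h2 : ω ∉ A₀ := fun hc => hω (hA₀GW hc)
    exact ⟨(hM₂A₀ ω).mpr h2, fun hc => hω hc.1⟩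
  obtain ⟨e₀, he₀val⟩ : ∃ e : ↥({a : ↥M₂ | (a : Ω) ∈ C}) ≃ ↥({a : ↥M₂ | (a : Ω) ∈ G₀}),
      ∀ p, (((e p : {a : ↥M₂ // (a : Ω) ∈ G₀}) : ↥M₂) : Ω) = φ ((p : ↥M₂) : Ω) :=
    ⟨((subSubEquiv hCM₂).trans e₀').trans (subSubEquiv hG₀M₂).symm,
      fun p => he₀' ((subSubEquiv hCM₂) p)⟩
  set e₁ : ↥({a : ↥M₂ | (a : Ω) ∈ C}ᶜ) ≃ ↥({a : ↥M₂ | (a : Ω) ∈ G₀}ᶜ) :=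
    (subDiffEquiv C M₂).trans ((cardEquiv (hMC.trans hMG₀.symm)).trans
      (subDiffEquiv G₀ M₂).symm) with he₁
  set τ₁ : Perm ↥M₂ := extendPerm _ _ e₀ e₁ with hτ₁def
  have hτ₁iff : ∀ a : ↥M₂, (a : Ω) ∈ C ↔ ((τ₁ a : ↥M₂) : Ω) ∈ G₀ := fun a =>
    extendPerm_iff e₀ e₁ a
  have hτ₁val : ∀ (ω : Ω) (hω : ω ∈ C), ((τ₁ ⟨ω, hCM₂ hω⟩ : ↥M₂) : Ω) = φ ω := by
    intro ω hω
    have h1 : (⟨ω, hCM₂ hω⟩ : ↥M₂) ∈ {a : ↥M₂ | (a : Ω) ∈ C} := hω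
    rw [hτ₁def, extendPerm_mem _ _ e₀ e₁ h1]
    exact he₀val ⟨⟨ω, hCM₂ hω⟩, h1⟩
  obtain ⟨u₁, hu₁U, hv₁⟩ := hgetV τ₁
  set v₁ : Perm Ω := x * u₁ * x with hv₁def
  have hv₁C : ∀ (ω : Ω) (hω : ω ∈ C), v₁ ω = φ ω := fun ω hω => by
    rw [hv₁.eq ⟨ω, hCM₂ hω⟩, hτ₁val ω hω]
  have hv₁iff : ∀ (a : Ω) (ha : a ∈ M₂), (a ∈ C ↔ v₁ a ∈ G₀) := fun a ha => by
    rw [hv₁.eq ⟨a, ha⟩]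
    exact hτ₁iff ⟨a, ha⟩
  have hv₁A₀ : PInv v₁ A₀ := pinv_flip hv₁.inv hM₂A₀
  -- K
  set K : Perm Ω := v₁⁻¹ * q with hK
  have hKZ₁ : ∀ z ∈ Z₁, K z = z := by
    intro z hz
    have h1 : v₁ z = q z := by rw [hv₁C z (hZ₁C hz), hφZ₁ z hz]
    show (v₁⁻¹ * q) z = z
    rw [Equiv.Perm.mul_apply, ← h1]
    simp
  have hKZ₂val : ∀ (z : Ω) (hz : z ∈ Z₂), K z = ((s ⟨z, hz⟩ : ↥Z₂) : Ω) := by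
    intro z hz
    have hw : ((s ⟨z, hz⟩ : ↥Z₂) : Ω) ∈ Z₂ := (s ⟨z, hz⟩).2
    have h1 : v₁ ((s ⟨z, hz⟩ : ↥Z₂) : Ω) = q z := by
      rw [hv₁C _ (hZ₂C hw), hφZ₂ _ hw]
      congr 1
      have h2 : (⟨((s ⟨z, hz⟩ : ↥Z₂) : Ω), hw⟩ : ↥Z₂) = s ⟨z, hz⟩ := Subtype.ext rfl
      rw [h2, Equiv.symm_apply_apply]
    show (v₁⁻¹ * q) z = _
    rw [Equiv.Perm.mul_apply, ← h1]
    simp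
  have hKZ₂img : ⇑K '' Z₂ = Z₂ := by
    ext z
    constructor
    · rintro ⟨w, hw, rfl⟩
      rw [hKZ₂val w hw]
      exact (s ⟨w, hw⟩).2
    · intro hz
      refine ⟨((s.symm ⟨z, hz⟩ : ↥Z₂) : Ω), (s.symm ⟨z, hz⟩).2, ?_⟩
      rw [hKZ₂val _ (s.symm ⟨z, hz⟩).2]
      have h2 : (⟨((s.symm ⟨z, hz⟩ : ↥Z₂) : Ω), (s.symm ⟨z, hz⟩).2⟩ : ↥Z₂) = s.symm ⟨z, hz⟩ :=
        Subtype.ext rfl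
      rw [h2, Equiv.apply_symm_apply]
  have hKZ₂inv : PInv K Z₂ := pinv_of_image K Z₂ hKZ₂img
  have hKfull : FullPerm Ω (K.subtypePerm hKZ₂inv.sym) := by
    have h1 : K.subtypePerm hKZ₂inv.sym = s := by
      apply Equiv.ext
      rintro ⟨z, hz⟩
      exact Subtype.ext (hKZ₂val z hz)
    rw [h1]
    exact hsfull
  have hnotM₁ : ∀ ω, ω ∉ M₁ → K ω ∉ M₁ := by
    intro ω h
    have hqGW : q ω ∉ GW := fun hc => h ((hqmem ω).mpr hc)
    have hqA₀ : q ω ∉ A₀ := fun hc => hqGW (hA₀GW hc)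
    have hqM₂ : q ω ∈ M₂ := (hM₂A₀ _).mpr hqA₀
    have hy : v₁⁻¹ (q ω) ∈ M₂ := (hv₁.inv.perm_inv _).mp hqM₂
    have hyC : v₁⁻¹ (q ω) ∉ C := by
      intro hc
      have h2 := (hv₁iff _ hy).mp hc
      rw [Equiv.Perm.apply_inv_self] at h2
      exact hqGW h2.1
    have hyB : v₁⁻¹ (q ω) ∈ B := by
      rcases (hM₂ _).mp hy with h2 | h2
      · exact absurd h2 hyC
      · exact h2
    show (v₁⁻¹ * q) ω ∉ M₁
    rw [Equiv.Perm.mul_apply]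
    exact fun hc => (hM₁B _).mp hc hyB
  have hKM₁ : PInv K M₁ := by
    intro ω
    constructor
    · intro h
      have hqGW : q ω ∈ GW := (hqmem ω).mp h
      show (v₁⁻¹ * q) ω ∈ M₁
      rw [Equiv.Perm.mul_apply]
      by_cases hA : q ω ∈ A₀
      · exact hA₀M₁ ((hv₁A₀.perm_inv (q ω)).mp hA)
      · have hqM₂ : q ω ∈ M₂ := (hM₂A₀ _).mpr hA
        have hy : v₁⁻¹ (q ω) ∈ M₂ := (hv₁.inv.perm_inv _).mp hqM₂
        have hyC : v₁⁻¹ (q ω) ∈ C := by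
          rw [hv₁iff _ hy]
          rw [Equiv.Perm.apply_inv_self]
          exact ⟨hqGW, hA⟩
        exact hCM₁ hyC
    · intro h
      by_contra hc
      exact hnotM₁ ω hc h
  -- apply the gadget
  obtain ⟨u₂, u₃, u₄, hu₂U, hu₃U, hu₄U, hKeq⟩ :=
    gadget A₀ C B M₁ M₂ x U hκ hxx hdA₀C hdCB hcA₀ hcC hA₀M₁ hCM₁ hM₁B hM₂A₀
      hgetU hgetV K Z₁ Z₂ hZ₁C hZ₂C hZ₁Z₂ hKZ₁ hZ₁c hKZ₂inv hKfull
  refine ⟨u₁, u₂, u₃, u₄, u₃⁻¹, u₂⁻¹, u₇, u₈, u₉, hu₁U, hu₂U, hu₃U, hu₄U,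
    hUinv u₃ hu₃U, hUinv u₂ hu₂U, hu₇U, hu₈U, hu₉U, ?_⟩
  have hgK : g = v₁ * K * (v₇ * (u₈ * u₉)) := by
    rw [hK, hq, hP]
    group
  rw [hgK, hKeq, hv₁def, hv₇def]
  simp only [mul_assoc]

end Master

/-! ### Final assembly -/

section Final

variable {Ω : Type u}

lemma xcollapse {x : Perm Ω} (hxx : x * x = 1) (p : Perm Ω) : x * (x * p) = p := by
  rw [← mul_assoc, hxx, one_mul]

lemma transport_full (x : Perm Ω) (S T : Set Ω) (U : Set (Perm Ω))
    (hxx : x * x = 1)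
    (hxT : ∀ t ∈ T, x t ∈ S) (hxS : ∀ s ∈ S, x s ∈ T)
    (hfull : ∀ σ : Perm ↥S, ∃ u ∈ U, Realizes S σ u) :
    ∀ τ : Perm ↥T, ∃ u ∈ U, Realizes T τ (x * u * x) := by
  intro τ
  have hxinv : ∀ ω, x (x ω) = ω := fun ω => by
    have := congrArg (fun p : Perm Ω => p ω) hxx
    simpa using this
  have hiffT : ∀ a, a ∈ T ↔ x a ∈ S := fun a =>
    ⟨fun h => hxT a h, fun h => by
      have := hxS (x a) h
      rwa [hxinv a] at this⟩
  have hiffS : ∀ a, a ∈ S ↔ x a ∈ T := fun a =>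
    ⟨fun h => hxS a h, fun h => by
      have := hxT (x a) h
      rwa [hxinv a] at this⟩
  set e : ↥T ≃ ↥S :=
    ⟨fun t => ⟨x t, hxT t t.2⟩, fun s => ⟨x s, hxS s s.2⟩,
      fun t => Subtype.ext (hxinv t), fun s => Subtype.ext (hxinv s)⟩ with he
  obtain ⟨u, huU, hu⟩ := hfull (e.permCongr τ)
  refine ⟨u, huU, ⟨?_, ?_⟩⟩
  · intro a
    have h1 : (x * u * x) a = x (u (x a)) := rfl
    rw [h1, hiffT a]
    rw [hu.inv (x a)]
    exact hiffS (u (x a))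
  · intro a
    have h1 : (x * u * x) (a : Ω) = x (u (x a)) := rfl
    have h2 : x (a : Ω) = ((e a : ↥S) : Ω) := rfl
    have h3 : u ((e a : ↥S) : Ω) = ((e.permCongr τ (e a) : ↥S) : Ω) := hu.eq (e a)
    have h4 : e.permCongr τ (e a) = e (τ a) := by
      rw [Equiv.permCongr_apply]
      rw [Equiv.symm_apply_apply]
    rw [h1, h2, h3, h4]
    show x (x ((τ a : ↥T) : Ω)) = _
    rw [hxinv]

lemma dichotomy (A₀ C B M₁ M₁' : Set Ω) (g : Perm Ω)
    (hκ : ℵ₀ ≤ #Ω) (hcC : #↥C = #Ω)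
    (hdA₀C : Disjoint A₀ C) (hdCB : Disjoint C B)
    (hcover : ∀ ω : Ω, ω ∈ A₀ ∨ ω ∈ C ∨ ω ∈ B)
    (hM₁ : ∀ ω, ω ∈ M₁ ↔ ω ∈ A₀ ∨ ω ∈ C)
    (hM₁' : ∀ ω, ω ∈ M₁' ↔ ω ∈ B ∨ ω ∈ C) :
    #↥(M₁ \ ⇑g ⁻¹' A₀) = #Ω ∨ #↥(M₁' \ ⇑g ⁻¹' B) = #Ω := by
  by_contra hcon
  push_neg at hcon
  obtain ⟨h1, h2⟩ := hcon
  have hl1 : #↥(M₁ \ ⇑g ⁻¹' A₀) < #Ω := lt_of_le_of_ne (Cardinal.mk_set_le _) h1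
  have hl2 : #↥(M₁' \ ⇑g ⁻¹' B) < #Ω := lt_of_le_of_ne (Cardinal.mk_set_le _) h2
  have hsub : C ⊆ (⇑g '' (M₁ \ ⇑g ⁻¹' A₀)) ∪ (⇑g '' (M₁' \ ⇑g ⁻¹' B)) := by
    intro c hc
    rcases hcover (g⁻¹ c) with h | h | h
    · left
      refine ⟨g⁻¹ c, ⟨(hM₁ _).mpr (Or.inl h), ?_⟩, by simp⟩
      intro hco
      rw [Set.mem_preimage] at hco
      simp only [Equiv.Perm.apply_inv_self] at hco
      exact (hdA₀C.le_bot ⟨hco, hc⟩ : c ∈ (∅ : Set Ω))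
    · left
      refine ⟨g⁻¹ c, ⟨(hM₁ _).mpr (Or.inr h), ?_⟩, by simp⟩
      intro hco
      rw [Set.mem_preimage] at hco
      simp only [Equiv.Perm.apply_inv_self] at hco
      exact (hdA₀C.le_bot ⟨hco, hc⟩ : c ∈ (∅ : Set Ω))
    · right
      refine ⟨g⁻¹ c, ⟨(hM₁' _).mpr (Or.inl h), ?_⟩, by simp⟩
      intro hco
      rw [Set.mem_preimage] at hco
      simp only [Equiv.Perm.apply_inv_self] at hco
      exact (hdCB.le_bot ⟨hc, hco⟩ : c ∈ (∅ : Set Ω))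
  have hlt : #↥((⇑g '' (M₁ \ ⇑g ⁻¹' A₀)) ∪ (⇑g '' (M₁' \ ⇑g ⁻¹' B))) < #Ω := by
    refine lt_of_le_of_lt (Cardinal.mk_union_le _ _) ?_
    rw [Cardinal.mk_image_eq g.injective, Cardinal.mk_image_eq g.injective]
    exact Cardinal.add_lt_of_lt hκ hl1 hl2
  have := (hcC ▸ Cardinal.mk_le_mk_of_subset hsub).trans_lt hlt
  exact absurd this (lt_irrefl _)

end Final

section Membership

open Pointwise

variable {Ω : Type u}

lemma mem_P2 (x : Perm Ω) (U : Set (Perm Ω)) {u₁ u₂ u₃ u₄ u₅ u₆ u₇ u₈ u₉ : Perm Ω}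
    (h₁ : u₁ ∈ U) (h₂ : u₂ ∈ U) (h₃ : u₃ ∈ U) (h₄ : u₄ ∈ U) (h₅ : u₅ ∈ U) (h₆ : u₆ ∈ U)
    (h₇ : u₇ ∈ U) (h₈ : u₈ ∈ U) (h₉ : u₉ ∈ U) :
    (x*u₁*x) * u₂ * (x*u₃*x) * u₄ * (x*u₅*x) * u₆ * (x*u₇*x) * u₈ * u₉
      ∈ ({x} * U) ^ 7 * {x} * U ^ 2 := by
  have hxmem : x ∈ ({x} : Set (Perm Ω)) := Set.mem_singleton x
  have hmm : ∀ {u : Perm Ω}, u ∈ U → x * u ∈ {x} * U := fun hu => Set.mul_mem_mul hxmem hu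
  have h7 : (x*u₁)*(x*u₂)*(x*u₃)*(x*u₄)*(x*u₅)*(x*u₆)*(x*u₇) ∈ ({x} * U) ^ 7 := by
    have e7 : ({x} * U : Set (Perm Ω)) ^ 7
        = ({x} * U) * ({x} * U) * ({x} * U) * ({x} * U) * ({x} * U) * ({x} * U) * ({x} * U) := by
      rw [show (7 : ℕ) = 6 + 1 from rfl, pow_succ, show (6 : ℕ) = 5 + 1 from rfl, pow_succ,
        show (5 : ℕ) = 4 + 1 from rfl, pow_succ, show (4 : ℕ) = 3 + 1 from rfl, pow_succ,
        show (3 : ℕ) = 2 + 1 from rfl, pow_succ, show (2 : ℕ) = 1 + 1 from rfl, pow_succ,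
        pow_one]
    rw [e7]
    exact Set.mul_mem_mul (Set.mul_mem_mul (Set.mul_mem_mul (Set.mul_mem_mul
      (Set.mul_mem_mul (Set.mul_mem_mul (hmm h₁) (hmm h₂)) (hmm h₃)) (hmm h₄))
      (hmm h₅)) (hmm h₆)) (hmm h₇)
  have hU2 : u₈ * u₉ ∈ U ^ 2 := by
    rw [pow_two]
    exact Set.mul_mem_mul h₈ h₉
  have hfinal : (x*u₁)*(x*u₂)*(x*u₃)*(x*u₄)*(x*u₅)*(x*u₆)*(x*u₇) * x * (u₈ * u₉)
      ∈ ({x} * U) ^ 7 * {x} * U ^ 2 :=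
    Set.mul_mem_mul (Set.mul_mem_mul h7 hxmem) hU2
  have heq : (x*u₁*x) * u₂ * (x*u₃*x) * u₄ * (x*u₅*x) * u₆ * (x*u₇*x) * u₈ * u₉
      = (x*u₁)*(x*u₂)*(x*u₃)*(x*u₄)*(x*u₅)*(x*u₆)*(x*u₇) * x * (u₈ * u₉) := by
    simp only [mul_assoc]
  rw [heq]
  exact hfinal

lemma mem_P1 {x : Perm Ω} (U : Set (Perm Ω)) (hxx : x * x = 1)
    {a₁ a₂ a₃ a₄ a₅ a₆ a₇ a₈ a₉ : Perm Ω}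
    (h₁ : a₁ ∈ U) (h₂ : a₂ ∈ U) (h₃ : a₃ ∈ U) (h₄ : a₄ ∈ U) (h₅ : a₅ ∈ U) (h₆ : a₆ ∈ U)
    (h₇ : a₇ ∈ U) (h₈ : a₈ ∈ U) (h₉ : a₉ ∈ U) :
    (x*(x*a₁*x)*x) * (x*a₂*x) * (x*(x*a₃*x)*x) * (x*a₄*x) * (x*(x*a₅*x)*x) * (x*a₆*x)
        * (x*(x*a₇*x)*x) * (x*a₈*x) * (x*a₉*x)
      ∈ (U * {x}) ^ 7 * U ^ 2 * {x} := by
  have hxmem : x ∈ ({x} : Set (Perm Ω)) := Set.mem_singleton x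
  have hmm : ∀ {u : Perm Ω}, u ∈ U → u * x ∈ U * {x} := fun hu => Set.mul_mem_mul hu hxmem
  have h7 : (a₁*x)*(a₂*x)*(a₃*x)*(a₄*x)*(a₅*x)*(a₆*x)*(a₇*x) ∈ (U * {x}) ^ 7 := by
    have e7 : (U * {x} : Set (Perm Ω)) ^ 7
        = (U * {x}) * (U * {x}) * (U * {x}) * (U * {x}) * (U * {x}) * (U * {x}) * (U * {x}) := by
      rw [show (7 : ℕ) = 6 + 1 from rfl, pow_succ, show (6 : ℕ) = 5 + 1 from rfl, pow_succ,
        show (5 : ℕ) = 4 + 1 from rfl, pow_succ, show (4 : ℕ) = 3 + 1 from rfl, pow_succ,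
        show (3 : ℕ) = 2 + 1 from rfl, pow_succ, show (2 : ℕ) = 1 + 1 from rfl, pow_succ,
        pow_one]
    rw [e7]
    exact Set.mul_mem_mul (Set.mul_mem_mul (Set.mul_mem_mul (Set.mul_mem_mul
      (Set.mul_mem_mul (Set.mul_mem_mul (hmm h₁) (hmm h₂)) (hmm h₃)) (hmm h₄))
      (hmm h₅)) (hmm h₆)) (hmm h₇)
  have hU2 : a₈ * a₉ ∈ U ^ 2 := by
    rw [pow_two]
    exact Set.mul_mem_mul h₈ h₉
  have hfinal : (a₁*x)*(a₂*x)*(a₃*x)*(a₄*x)*(a₅*x)*(a₆*x)*(a₇*x) * (a₈ * a₉) * x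
      ∈ (U * {x}) ^ 7 * U ^ 2 * {x} :=
    Set.mul_mem_mul (Set.mul_mem_mul h7 hU2) hxmem
  have heq : (x*(x*a₁*x)*x) * (x*a₂*x) * (x*(x*a₃*x)*x) * (x*a₄*x) * (x*(x*a₅*x)*x) * (x*a₆*x)
        * (x*(x*a₇*x)*x) * (x*a₈*x) * (x*a₉*x)
      = (a₁*x)*(a₂*x)*(a₃*x)*(a₄*x)*(a₅*x)*(a₆*x)*(a₇*x) * (a₈ * a₉) * x := by
    simp only [mul_assoc, xcollapse hxx]
  rw [heq]
  exact hfinal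

end Membership

end Stmt2

open Pointwise

def IsMoiety {Ω : Type*} (A : Set Ω) : Prop :=
  Cardinal.mk A = Cardinal.mk Ω ∧ Cardinal.mk ↥(Aᶜ) = Cardinal.mk Ω

def IsFull {Ω : Type*} (U : Set (Equiv.Perm Ω)) (A : Set Ω) : Prop :=
  ∀ σ : Equiv.Perm A, ∃ f ∈ U, f '' A = A ∧ ∀ a : A, f a = (σ a : Ω)

theorem stmt2 {Ω : Type*} [Infinite Ω] (U : Set (Equiv.Perm Ω)) (hU : U⁻¹ = U)
    (A : Set Ω) (hA : IsMoiety A) (hfull : IsFull U A) :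
    ∃ x : Equiv.Perm Ω, orderOf x = 2 ∧
      (U * {x}) ^ 7 * U ^ 2 * {x} ∪ ({x} * U) ^ 7 * {x} * U ^ 2 = Set.univ := by
  classical
  obtain ⟨hAc, hBc⟩ := hA
  have hκ : ℵ₀ ≤ #Ω := Cardinal.infinite_iff.mp ‹Infinite Ω›
  obtain ⟨A₀, hA₀A, hcA₀, hcC⟩ := Stmt2.exists_split A hκ hAc
  set C : Set Ω := A \ A₀ with hCdef
  set B : Set Ω := Aᶜ with hBdef
  have hCA : C ⊆ A := Set.diff_subset
  have hdA₀C : Disjoint A₀ C := Set.disjoint_left.mpr fun a ha h2 => h2.2 ha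
  have hdCB : Disjoint C B := Set.disjoint_left.mpr fun a ha h2 => h2 ha.1
  have hdA₀B : Disjoint A₀ B := Set.disjoint_left.mpr fun a ha h2 => h2 (hA₀A ha)
  have hM₁ : ∀ ω, ω ∈ A ↔ ω ∈ A₀ ∨ ω ∈ C := by
    intro ω
    constructor
    · intro h
      by_cases h0 : ω ∈ A₀
      · exact Or.inl h0
      · exact Or.inr ⟨h, h0⟩
    · rintro (h | h)
      · exact hA₀A h
      · exact h.1
  have hcover : ∀ ω : Ω, ω ∈ A₀ ∨ ω ∈ C ∨ ω ∈ B := by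
    intro ω
    by_cases h : ω ∈ A
    · rcases (hM₁ ω).mp h with h1 | h1
      · exact Or.inl h1
      · exact Or.inr (Or.inl h1)
    · exact Or.inr (Or.inr h)
  have hM₂ : ∀ ω, ω ∈ C ∪ B ↔ ω ∈ C ∨ ω ∈ B := fun ω => Set.mem_union ω C B
  -- the involution x
  have φ : ↥A₀ ≃ ↥B := Stmt2.cardEquiv (hcA₀.trans hBc.symm)
  set xf : Ω → Ω := fun ω =>
    if h : ω ∈ A₀ then ((φ ⟨ω, h⟩ : ↥B) : Ω)
    else if h : ω ∈ B then ((φ.symm ⟨ω, h⟩ : ↥A₀) : Ω)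
    else ω
    with hxf
  have hxfA₀ : ∀ ω (h : ω ∈ A₀), xf ω = ((φ ⟨ω, h⟩ : ↥B) : Ω) := fun ω h => dif_pos h
  have hxfB : ∀ ω (h : ω ∈ B), xf ω = ((φ.symm ⟨ω, h⟩ : ↥A₀) : Ω) := by
    intro ω h
    have h1 : ω ∉ A₀ := fun hc => (hdA₀B.le_bot ⟨hc, h⟩ : ω ∈ (∅ : Set Ω)).elim
    simp only [hxf]
    rw [dif_neg h1, dif_pos h]
  have hxfC : ∀ ω, ω ∈ C → xf ω = ω := by
    intro ω h
    have h1 : ω ∉ A₀ := fun hc => (hdA₀C.le_bot ⟨hc, h⟩ : ω ∈ (∅ : Set Ω)).elim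
    have h2 : ω ∉ B := fun hc => (hdCB.le_bot ⟨h, hc⟩ : ω ∈ (∅ : Set Ω)).elim
    simp only [hxf]
    rw [dif_neg h1, dif_neg h2]
  have hxinvol : Function.Involutive xf := by
    intro ω
    by_cases h1 : ω ∈ A₀
    · rw [hxfA₀ ω h1]
      have hb : ((φ ⟨ω, h1⟩ : ↥B) : Ω) ∈ B := (φ ⟨ω, h1⟩).2
      rw [hxfB _ hb]
      have h2 : (⟨((φ ⟨ω, h1⟩ : ↥B) : Ω), hb⟩ : ↥B) = φ ⟨ω, h1⟩ := Subtype.ext rfl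
      rw [h2, Equiv.symm_apply_apply]
    · by_cases h2 : ω ∈ B
      · rw [hxfB ω h2]
        have ha : ((φ.symm ⟨ω, h2⟩ : ↥A₀) : Ω) ∈ A₀ := (φ.symm ⟨ω, h2⟩).2
        rw [hxfA₀ _ ha]
        have h3 : (⟨((φ.symm ⟨ω, h2⟩ : ↥A₀) : Ω), ha⟩ : ↥A₀) = φ.symm ⟨ω, h2⟩ := Subtype.ext rfl
        rw [h3, Equiv.apply_symm_apply]
      · have h3 : ω ∈ C := by
          rcases hcover ω with h | h | h
          · exact absurd h h1
          · exact h
          · exact absurd h h2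
        rw [hxfC ω h3, hxfC ω h3]
  set x : Equiv.Perm Ω := hxinvol.toPerm with hxdef
  have hxapp : ∀ ω, x ω = xf ω := fun ω => rfl
  have hxx : x * x = 1 := by
    apply Equiv.ext
    intro ω
    show x (x ω) = ω
    rw [hxapp, hxapp]
    exact hxinvol ω
  have hxA₀ : ∀ a ∈ A₀, x a ∈ B := by
    intro a ha
    rw [hxapp, hxfA₀ a ha]
    exact (φ ⟨a, ha⟩).2
  have hxB : ∀ b ∈ B, x b ∈ A₀ := by
    intro b hb
    rw [hxapp, hxfB b hb]
    exact (φ.symm ⟨b, hb⟩).2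
  have hxC : ∀ c ∈ C, x c = c := fun c hc => by rw [hxapp, hxfC c hc]
  -- order of x
  have hA₀ne : Nonempty ↥A₀ := by
    rw [← Cardinal.mk_ne_zero_iff, hcA₀]
    exact Cardinal.mk_ne_zero Ω
  have horder : orderOf x = 2 := by
    refine orderOf_eq_prime ?_ ?_
    · rw [pow_two]; exact hxx
    · intro hc
      obtain ⟨a, ha⟩ := hA₀ne
      have h1 : x a = a := by rw [hc]; rfl
      have h2 : x a ∈ B := hxA₀ a ha
      rw [h1] at h2
      exact h2 (hA₀A ha)
  -- realizers
  have hUinv : ∀ u ∈ U, u⁻¹ ∈ U := by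
    intro u hu
    rw [← hU, Set.mem_inv]
    simpa using hu
  have hgetU : ∀ σ : Equiv.Perm ↥A, ∃ u ∈ U, Stmt2.Realizes A σ u := by
    intro σ
    obtain ⟨f, hfU, himg, heq⟩ := hfull σ
    exact ⟨f, hfU, ⟨Stmt2.pinv_of_image f A himg, heq⟩⟩
  have hxT : ∀ t ∈ C ∪ B, x t ∈ A := by
    rintro t (h | h)
    · rw [hxC t h]; exact hCA h
    · exact hA₀A (hxB t h)
  have hxS : ∀ s ∈ A, x s ∈ C ∪ B := by
    intro s hs
    rcases (hM₁ s).mp hs with h | h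
    · exact Or.inr (hxA₀ s h)
    · rw [hxC s h]; exact Or.inl h
  have hgetV : ∀ τ : Equiv.Perm ↥(C ∪ B), ∃ u ∈ U, Stmt2.Realizes (C ∪ B) τ (x * u * x) :=
    Stmt2.transport_full x A (C ∪ B) U hxx hxT hxS hgetU
  -- mirror data
  set U' : Set (Equiv.Perm Ω) := {p | ∃ u ∈ U, p = x * u * x} with hU'def
  have hcolx : ∀ p : Equiv.Perm Ω, x * (x * p * x) * x = p := by
    intro p
    simp only [mul_assoc, Stmt2.xcollapse hxx]
    rw [hxx, mul_one]
  have hU'inv : ∀ u' ∈ U', u'⁻¹ ∈ U' := by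
    rintro _ ⟨u, hu, rfl⟩
    have hxinv : x⁻¹ = x := by
      rw [← mul_one x⁻¹, ← hxx, ← mul_assoc, inv_mul_cancel, one_mul]
    refine ⟨u⁻¹, hUinv u hu, ?_⟩
    rw [mul_inv_rev, mul_inv_rev, hxinv, mul_assoc]
  have hgetU' : ∀ σ : Equiv.Perm ↥(C ∪ B), ∃ u' ∈ U', Stmt2.Realizes (C ∪ B) σ u' := by
    intro σ
    obtain ⟨u, hu, hreal⟩ := hgetV σ
    exact ⟨x * u * x, ⟨u, hu, rfl⟩, hreal⟩
  have hgetV' : ∀ τ : Equiv.Perm ↥A, ∃ u' ∈ U', Stmt2.Realizes A τ (x * u' * x) := by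
    intro τ
    obtain ⟨u, hu, hreal⟩ := hgetU τ
    refine ⟨x * u * x, ⟨u, hu, rfl⟩, ?_⟩
    rw [hcolx u]
    exact hreal
  have hM₁' : ∀ ω, ω ∈ C ∪ B ↔ ω ∈ B ∨ ω ∈ C := by
    intro ω
    rw [Set.mem_union]
    exact Or.comm
  have hM₂' : ∀ ω, ω ∈ A ↔ ω ∈ C ∨ ω ∈ A₀ := by
    intro ω
    rw [hM₁ ω]
    exact Or.comm
  have hcover' : ∀ ω : Ω, ω ∈ B ∨ ω ∈ C ∨ ω ∈ A₀ := by
    intro ω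
    rcases hcover ω with h | h | h
    · exact Or.inr (Or.inr h)
    · exact Or.inr (Or.inl h)
    · exact Or.inl h
  -- conclusion
  refine ⟨x, horder, ?_⟩
  rw [Set.eq_univ_iff_forall]
  intro g
  rcases Stmt2.dichotomy A₀ C B A (C ∪ B) g hκ hcC hdA₀C hdCB hcover hM₁ hM₁' with hg | hg
  · -- pattern P2
    right
    obtain ⟨u₁, u₂, u₃, u₄, u₅, u₆, u₇, u₈, u₉, h₁, h₂, h₃, h₄, h₅, h₆, h₇, h₈, h₉, hgeq⟩ :=
      Stmt2.master A₀ C B A (C ∪ B) x U hκ hxx hdA₀C hdCB hdA₀B hcA₀ hcC hBc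
        hM₁ hM₂ hcover hUinv hgetU hgetV g hg
    rw [hgeq]
    exact Stmt2.mem_P2 x U h₁ h₂ h₃ h₄ h₅ h₆ h₇ h₈ h₉
  · -- pattern P1 via the mirror configuration
    left
    obtain ⟨u₁, u₂, u₃, u₄, u₅, u₆, u₇, u₈, u₉, h₁, h₂, h₃, h₄, h₅, h₆, h₇, h₈, h₉, hgeq⟩ :=
      Stmt2.master B C A₀ (C ∪ B) A x U' hκ hxx hdCB.symm hdA₀C.symm hdA₀B.symm hBc hcC hcA₀
        hM₁' hM₂' hcover' hU'inv hgetU' hgetV' g hg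
    obtain ⟨a₁, ha₁, rfl⟩ := h₁
    obtain ⟨a₂, ha₂, rfl⟩ := h₂
    obtain ⟨a₃, ha₃, rfl⟩ := h₃
    obtain ⟨a₄, ha₄, rfl⟩ := h₄
    obtain ⟨a₅, ha₅, rfl⟩ := h₅
    obtain ⟨a₆, ha₆, rfl⟩ := h₆
    obtain ⟨a₇, ha₇, rfl⟩ := h₇
    obtain ⟨a₈, ha₈, rfl⟩ := h₈
    obtain ⟨a₉, ha₉, rfl⟩ := h₉
    rw [hgeq]
    exact Stmt2.mem_P1 U hxx ha₁ ha₂ ha₃ ha₄ ha₅ ha₆ ha₇ ha₈ ha₉
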